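/- arXiv:2502.20863 — 3 statements merged into one kernel-verified Lean document; each statement's English description precedes it below -/
import Mathlib

section
/- Let m ≥ 10^9 be an integer and set s = ⌊2^{10^{-8}·m}⌋. There exists a partition E(K_s) = E_R ∪ E_B of the edge set of the complete graph on vertex set [s] such that for every function w : [s] → [0,1] with Σ_{i=1}^s w(i) = x ≥ m and for each c ∈ {R, B}, it holds that Σ_{ij ∈ E_c} w(i)·w(j) < 0.51·x(x−1)/2. -/
open Finset

/-- `sBound m = ⌊2^(10⁻⁸·m)⌋`. -/
noncomputable def sBound (m : ℕ) : ℕ := ⌊(2 : ℝ) ^ ((m : ℝ) / 10 ^ 8)⌋₊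

open Real

namespace GRR

/-- sign of a boolean as a real number. -/
def sg (b : Bool) : ℝ := if b then 1 else -1

lemma abs_sg (b : Bool) : |sg b| = 1 := by cases b <;> simp [sg]

lemma cube_sum {ι : Type*} [Fintype ι] [DecidableEq ι] (f : ι → Bool → ℝ) :
    ∑ g : ι → Bool, ∏ i, f i (g i) = ∏ i, (f i true + f i false) := by
  rw [← Fintype.prod_sum (κ := fun _ : ι => Bool) f]
  refine Finset.prod_congr rfl fun i _ => ?_
  simp [Fintype.sum_bool]

lemma chernoff_le {κ : Type*} [Fintype κ] [DecidableEq κ] (E : Finset κ) (c : κ → ℝ)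
    (hc : ∀ e, c e = 1 ∨ c e = -1) {t : ℝ} (ht : 0 < t) (hE : E.Nonempty) :
    (((univ : Finset (κ → Bool)).filter
        (fun ω => t ≤ ∑ e ∈ E, c e * sg (ω e))).card : ℝ)
      ≤ 2 ^ (Fintype.card κ) * Real.exp (-(t ^ 2) / (2 * E.card)) := by
  have hN : (0 : ℝ) < E.card := by exact_mod_cast card_pos.mpr hE
  set l : ℝ := t / E.card with hl
  have hl0 : 0 < l := div_pos ht hN
  -- the mgf sum
  set F : κ → Bool → ℝ := fun i b => if i ∈ E then Real.exp (l * (c i * sg b)) else 1 with hF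
  have key : ∀ ω : κ → Bool, Real.exp (l * ∑ e ∈ E, c e * sg (ω e)) = ∏ i, F i (ω i) := by
    intro ω
    rw [Finset.mul_sum, Real.exp_sum]
    rw [← Finset.prod_subset (subset_univ E) (f := fun i => F i (ω i))
        (fun x _ hx => by simp [hF, hx])]
    refine Finset.prod_congr rfl fun i hi => ?_
    simp [hF, hi]
  have mgf : ∑ ω : κ → Bool, ∏ i, F i (ω i)
      = 2 ^ (Fintype.card κ - E.card) * (2 * Real.cosh l) ^ E.card := by
    rw [cube_sum]
    have hfac : ∀ i, F i true + F i false = if i ∈ E then 2 * Real.cosh l else 2 := by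
      intro i
      by_cases hi : i ∈ E
      · rcases hc i with h | h <;>
          simp [hF, hi, h, Real.cosh_eq, sg] <;> ring
      · norm_num [hF, hi]
    calc ∏ i, (F i true + F i false) = ∏ i, (if i ∈ E then 2 * Real.cosh l else 2) :=
          Finset.prod_congr rfl fun i _ => hfac i
      _ = (∏ i ∈ E, (if i ∈ E then 2 * Real.cosh l else (2:ℝ)))
            * ∏ i ∈ Eᶜ, (if i ∈ E then 2 * Real.cosh l else (2:ℝ)) :=
          (Finset.prod_mul_prod_compl E _).symm
      _ = (2 * Real.cosh l) ^ E.card * 2 ^ Eᶜ.card := by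
          rw [Finset.prod_congr rfl (fun i hi => if_pos hi),
            Finset.prod_congr rfl (fun i (hi : i ∈ Eᶜ) => if_neg (by simpa using hi)),
            Finset.prod_const, Finset.prod_const]
      _ = 2 ^ (Fintype.card κ - E.card) * (2 * Real.cosh l) ^ E.card := by
          rw [Finset.card_compl]; ring
  have lower : (((univ : Finset (κ → Bool)).filter
        (fun ω => t ≤ ∑ e ∈ E, c e * sg (ω e))).card : ℝ) * Real.exp (l * t)
      ≤ ∑ ω : κ → Bool, ∏ i, F i (ω i) := by
    calc (((univ : Finset (κ → Bool)).filter
        (fun ω => t ≤ ∑ e ∈ E, c e * sg (ω e))).card : ℝ) * Real.exp (l * t)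
        = ∑ _ω ∈ (univ : Finset (κ → Bool)).filter
            (fun ω => t ≤ ∑ e ∈ E, c e * sg (ω e)), Real.exp (l * t) := by
          rw [Finset.sum_const, nsmul_eq_mul]
      _ ≤ ∑ ω ∈ (univ : Finset (κ → Bool)).filter
            (fun ω => t ≤ ∑ e ∈ E, c e * sg (ω e)), ∏ i, F i (ω i) := by
          refine Finset.sum_le_sum fun ω hω => ?_
          rw [← key ω]
          exact Real.exp_le_exp.mpr (by
            have := (Finset.mem_filter.mp hω).2
            nlinarith)
      _ ≤ ∑ ω : κ → Bool, ∏ i, F i (ω i) := by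
          refine Finset.sum_le_sum_of_subset_of_nonneg (filter_subset _ _) fun ω _ _ => ?_
          rw [← key ω]; positivity
  have cosh_bd : (2 * Real.cosh l) ^ E.card ≤ (2 * Real.exp (l ^ 2 / 2)) ^ E.card := by
    refine pow_le_pow_left₀ (by positivity) ?_ _
    have := Real.cosh_le_exp_half_sq l
    linarith
  have expo : 2 ^ (Fintype.card κ - E.card) * (2 * Real.exp (l ^ 2 / 2)) ^ E.card
      = 2 ^ (Fintype.card κ) * Real.exp (E.card * (l ^ 2 / 2)) := by
    rw [mul_pow, ← Real.exp_nat_mul, ← mul_assoc, ← pow_add,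
      Nat.sub_add_cancel (Finset.card_le_univ E)]
  have hEt : Real.exp (E.card * (l ^ 2 / 2)) / Real.exp (l * t)
      = Real.exp (-(t ^ 2) / (2 * E.card)) := by
    rw [← Real.exp_sub]
    congr 1
    rw [hl]
    have hN' := hN.ne'
    field_simp
    ring
  have upper : ∑ ω : κ → Bool, ∏ i, F i (ω i)
      ≤ 2 ^ (Fintype.card κ) * Real.exp (E.card * (l ^ 2 / 2)) := by
    rw [mgf, ← expo]
    exact mul_le_mul_of_nonneg_left cosh_bd (by positivity)
  have hcard := lower.trans upper
  -- from card * exp(lt) ≤ 2^K exp(N l²/2), conclude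
  have hexp : 0 < Real.exp (l * t) := Real.exp_pos _
  calc (((univ : Finset (κ → Bool)).filter
        (fun ω => t ≤ ∑ e ∈ E, c e * sg (ω e))).card : ℝ)
      ≤ 2 ^ (Fintype.card κ) * Real.exp (E.card * (l ^ 2 / 2)) / Real.exp (l * t) := by
        rw [le_div_iff₀ hexp]; exact hcard
    _ = 2 ^ (Fintype.card κ) * Real.exp (-(t ^ 2) / (2 * E.card)) := by
        rw [mul_div_assoc, hEt]

lemma chernoff_abs {κ : Type*} [Fintype κ] [DecidableEq κ] (E : Finset κ) {t : ℝ} (ht : 0 < t) :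
    (((univ : Finset (κ → Bool)).filter
        (fun ω => t ≤ |∑ e ∈ E, sg (ω e)|)).card : ℝ)
      ≤ 2 * 2 ^ (Fintype.card κ) * Real.exp (-(t ^ 2) / (2 * E.card)) := by
  rcases E.eq_empty_or_nonempty with rfl | hE
  · simp only [Finset.sum_empty, Finset.card_empty]
    have h1 : Real.exp (-(t ^ 2) / (2 * (0:ℕ))) = 1 := by norm_num
    rw [h1]
    have : ((univ : Finset (κ → Bool)).filter (fun _ω => t ≤ |(0:ℝ)|)).card
        ≤ (univ : Finset (κ → Bool)).card := Finset.card_filter_le _ _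
    have hcu : ((univ : Finset (κ → Bool)).card : ℝ) = 2 ^ (Fintype.card κ) := by
      rw [Finset.card_univ, Fintype.card_fun]; norm_num
    calc (((univ : Finset (κ → Bool)).filter (fun _ω => t ≤ |(0:ℝ)|)).card : ℝ)
        ≤ ((univ : Finset (κ → Bool)).card : ℝ) := by exact_mod_cast this
      _ ≤ 2 * 2 ^ (Fintype.card κ) * 1 := by rw [hcu]; nlinarith [pow_pos (by norm_num : (0:ℝ) < 2) (Fintype.card κ)]
  · have hsub : (univ : Finset (κ → Bool)).filter (fun ω => t ≤ |∑ e ∈ E, sg (ω e)|)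
        ⊆ ((univ : Finset (κ → Bool)).filter (fun ω => t ≤ ∑ e ∈ E, (1:ℝ) * sg (ω e)))
          ∪ ((univ : Finset (κ → Bool)).filter (fun ω => t ≤ ∑ e ∈ E, (-1:ℝ) * sg (ω e))) := by
      intro ω hω
      rw [Finset.mem_filter] at hω
      rw [Finset.mem_union, Finset.mem_filter, Finset.mem_filter]
      rcases abs_cases (∑ e ∈ E, sg (ω e)) with ⟨h, _⟩ | ⟨h, _⟩
      · refine Or.inl ⟨mem_univ _, ?_⟩
        simp only [one_mul]
        rw [← h]; exact hω.2
      · refine Or.inr ⟨mem_univ _, ?_⟩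
        have : ∑ e ∈ E, (-1:ℝ) * sg (ω e) = -∑ e ∈ E, sg (ω e) := by
          rw [← Finset.sum_neg_distrib]; exact Finset.sum_congr rfl fun e _ => by ring
        rw [this, ← h]; exact hω.2
    have h1 := chernoff_le E (fun _ => (1:ℝ)) (fun _ => Or.inl rfl) ht hE
    have h2 := chernoff_le E (fun _ => (-1:ℝ)) (fun _ => Or.inr rfl) ht hE
    have := Finset.card_le_card hsub
    have hu := Finset.card_union_le
      ((univ : Finset (κ → Bool)).filter (fun ω => t ≤ ∑ e ∈ E, (1:ℝ) * sg (ω e)))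
      ((univ : Finset (κ → Bool)).filter (fun ω => t ≤ ∑ e ∈ E, (-1:ℝ) * sg (ω e)))
    have hc : (((univ : Finset (κ → Bool)).filter
        (fun ω => t ≤ |∑ e ∈ E, sg (ω e)|)).card : ℝ)
        ≤ (((univ : Finset (κ → Bool)).filter (fun ω => t ≤ ∑ e ∈ E, (1:ℝ) * sg (ω e))).card : ℝ)
          + (((univ : Finset (κ → Bool)).filter (fun ω => t ≤ ∑ e ∈ E, (-1:ℝ) * sg (ω e))).card : ℝ) := by
      exact_mod_cast le_trans this hu
    calc (((univ : Finset (κ → Bool)).filter (fun ω => t ≤ |∑ e ∈ E, sg (ω e)|)).card : ℝ)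
        ≤ _ + _ := hc
      _ ≤ 2 ^ (Fintype.card κ) * Real.exp (-(t ^ 2) / (2 * E.card))
          + 2 ^ (Fintype.card κ) * Real.exp (-(t ^ 2) / (2 * E.card)) := add_le_add h1 h2
      _ = 2 * 2 ^ (Fintype.card κ) * Real.exp (-(t ^ 2) / (2 * E.card)) := by ring

variable {n : ℕ}

/-- ordered pairs from `S` -/
def pairs (S : Finset (Fin n)) : Finset (Fin n × Fin n) := (S ×ˢ S).filter fun p => p.1 < p.2

/-- signed edge count -/
def X (ω : Fin n × Fin n → Bool) (S : Finset (Fin n)) : ℝ := ∑ p ∈ pairs S, sg (ω p)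

/-- threshold function -/
noncomputable def tf (m k : ℕ) : ℝ := (k : ℝ) * ((k : ℝ) + m) / 1000

lemma tf_nonneg (m k : ℕ) : 0 ≤ tf m k := by unfold tf; positivity

lemma two_mul_pairs_card (S : Finset (Fin n)) : 2 * (pairs S).card ≤ S.card * S.card := by
  classical
  have himg : ((pairs S).image Prod.swap) ⊆ (S ×ˢ S).filter fun p => p.2 < p.1 := by
    intro p hp
    rw [Finset.mem_image] at hp
    obtain ⟨q, hq, rfl⟩ := hp
    rw [pairs, Finset.mem_filter, Finset.mem_product] at hq
    rw [Finset.mem_filter, Finset.mem_product]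
    exact ⟨⟨hq.1.2, hq.1.1⟩, hq.2⟩
  have hcard : (pairs S).card = ((pairs S).image Prod.swap).card :=
    (Finset.card_image_of_injective _ Prod.swap_injective).symm
  have hdisj : Disjoint (pairs S) ((S ×ˢ S).filter fun p => p.2 < p.1) := by
    rw [Finset.disjoint_left]
    intro p hp hp'
    rw [pairs, Finset.mem_filter] at hp
    rw [Finset.mem_filter] at hp'
    exact absurd hp'.2 (lt_asymm hp.2)
  have hunion := Finset.card_union_of_disjoint hdisj
  have hsub : (pairs S) ∪ ((S ×ˢ S).filter fun p => p.2 < p.1) ⊆ S ×ˢ S := by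
    refine Finset.union_subset ?_ (Finset.filter_subset _ _)
    exact Finset.filter_subset _ _
  have h1 := Finset.card_le_card hsub
  have h2 := Finset.card_le_card himg
  rw [Finset.card_product] at h1
  omega

lemma abs_X_le (ω : Fin n × Fin n → Bool) (S : Finset (Fin n)) :
    |X ω S| ≤ ((pairs S).card : ℝ) := by
  refine (Finset.abs_sum_le_sum_abs _ _).trans ?_
  simp [abs_sg]

lemma perS_bound (m : ℕ) (S : Finset (Fin n)) :
    ((univ.filter fun ω : Fin n × Fin n → Bool => tf m S.card < |X ω S|).card : ℝ)
      ≤ 2 * 2 ^ (Fintype.card (Fin n × Fin n))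
          * Real.exp (-(((S.card : ℝ) + m) ^ 2) / 10 ^ 6) := by
  classical
  by_cases hpz : (pairs S).card = 0
  · have hpe : pairs S = ∅ := Finset.card_eq_zero.mp hpz
    have hfe : (univ.filter fun ω : Fin n × Fin n → Bool => tf m S.card < |X ω S|) = ∅ := by
      refine Finset.filter_eq_empty_iff.mpr fun ω _ => ?_
      rw [X, hpe, Finset.sum_empty]
      simpa using tf_nonneg m S.card
    rw [hfe]
    simp only [Finset.card_empty, Nat.cast_zero]
    positivity
  · have hN : 0 < (pairs S).card := Nat.pos_of_ne_zero hpz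
    have hSne : S.Nonempty := by
      obtain ⟨p, hp⟩ := Finset.card_pos.mp hN
      rw [pairs, Finset.mem_filter, Finset.mem_product] at hp
      exact ⟨p.1, hp.1.1⟩
    have hk : 0 < S.card := Finset.card_pos.mpr hSne
    have hk' : (1:ℝ) ≤ S.card := by exact_mod_cast hk
    have ht : 0 < tf m S.card := by
      rw [tf]
      have : (0:ℝ) ≤ m := Nat.cast_nonneg m
      nlinarith
    have hsub : (univ.filter fun ω : Fin n × Fin n → Bool => tf m S.card < |X ω S|)
        ⊆ (univ.filter fun ω : Fin n × Fin n → Bool => tf m S.card ≤ |X ω S|) := by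
      intro ω hω
      rw [Finset.mem_filter] at hω ⊢
      exact ⟨hω.1, le_of_lt hω.2⟩
    have h1 : ((univ.filter fun ω : Fin n × Fin n → Bool => tf m S.card < |X ω S|).card : ℝ)
        ≤ ((univ.filter fun ω : Fin n × Fin n → Bool => tf m S.card ≤ |X ω S|).card : ℝ) := by
      exact_mod_cast Finset.card_le_card hsub
    have h2 := chernoff_abs (E := pairs S) (t := tf m S.card) ht
    have h3 : Real.exp (-(tf m S.card ^ 2) / (2 * (pairs S).card))
        ≤ Real.exp (-(((S.card : ℝ) + m) ^ 2) / 10 ^ 6) := by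
      rw [Real.exp_le_exp]
      rw [div_le_div_iff₀ (by positivity) (by positivity)]
      have hle : (2 * (pairs S).card : ℝ) ≤ (S.card : ℝ) * S.card := by
        exact_mod_cast two_mul_pairs_card S
      have hm0 : (0:ℝ) ≤ (m:ℝ) := Nat.cast_nonneg m
      have ht2 : tf m S.card ^ 2 = (S.card:ℝ)^2 * ((S.card:ℝ) + m)^2 / 10^6 := by
        rw [tf]; ring
      have hNpos : (0:ℝ) < 2 * (pairs S).card := by positivity
      nlinarith [sq_nonneg ((S.card:ℝ) + m), sq_nonneg (S.card:ℝ)]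
    calc ((univ.filter fun ω : Fin n × Fin n → Bool => tf m S.card < |X ω S|).card : ℝ)
        ≤ _ := h1
      _ ≤ 2 * 2 ^ (Fintype.card (Fin n × Fin n))
          * Real.exp (-(tf m S.card ^ 2) / (2 * (pairs S).card)) := h2
      _ ≤ 2 * 2 ^ (Fintype.card (Fin n × Fin n))
          * Real.exp (-(((S.card : ℝ) + m) ^ 2) / 10 ^ 6) := by
        refine mul_le_mul_of_nonneg_left h3 (by positivity)

lemma exists_good (m : ℕ) (hm : 10 ^ 9 ≤ m) (hn1 : 1 ≤ n)
    (hns : (n : ℝ) ≤ Real.exp ((m : ℝ) / 10 ^ 8)) :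
    ∃ ω : Fin n × Fin n → Bool, ∀ S : Finset (Fin n), |X ω S| ≤ tf m S.card := by
  classical
  set K := Fintype.card (Fin n × Fin n) with hK
  set bad := (univ : Finset (Fin n × Fin n → Bool)).filter
    (fun ω => ∃ S : Finset (Fin n), tf m S.card < |X ω S|) with hbad
  have hm1 : (1:ℝ) ≤ (m:ℝ) := by
    have : (1:ℕ) ≤ m := le_trans (by norm_num) hm
    exact_mod_cast this
  have hmR : (10:ℝ)^9 ≤ (m:ℝ) := by exact_mod_cast hm
  have hsub : bad ⊆ (univ : Finset (Fin n)).powerset.biUnion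
      (fun S => univ.filter fun ω : Fin n × Fin n → Bool => tf m S.card < |X ω S|) := by
    intro ω hω
    rw [hbad, Finset.mem_filter] at hω
    obtain ⟨S, hS⟩ := hω.2
    rw [Finset.mem_biUnion]
    exact ⟨S, Finset.mem_powerset.mpr (Finset.subset_univ S), Finset.mem_filter.mpr ⟨mem_univ _, hS⟩⟩
  have hb1 : (bad.card : ℝ) ≤ ∑ S ∈ (univ : Finset (Fin n)).powerset,
      ((univ.filter fun ω : Fin n × Fin n → Bool => tf m S.card < |X ω S|).card : ℝ) := by
    have := (Finset.card_le_card hsub).trans (Finset.card_biUnion_le)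
    exact_mod_cast this
  have hb2 : (bad.card : ℝ) ≤ ∑ S ∈ (univ : Finset (Fin n)).powerset,
      2 * 2 ^ K * Real.exp (-(((S.card : ℝ) + m) ^ 2) / 10 ^ 6) :=
    hb1.trans (Finset.sum_le_sum fun S _ => perS_bound m S)
  have hb3 : ∑ S ∈ (univ : Finset (Fin n)).powerset,
      2 * 2 ^ K * Real.exp (-(((S.card : ℝ) + m) ^ 2) / 10 ^ 6)
      = ∑ k ∈ Finset.range (n + 1),
        ((n.choose k : ℝ)) * (2 * 2 ^ K * Real.exp (-(((k : ℝ) + m) ^ 2) / 10 ^ 6)) := by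
    rw [Finset.sum_powerset_apply_card
      (f := fun k : ℕ => 2 * 2 ^ K * Real.exp (-(((k : ℝ) + m) ^ 2) / 10 ^ 6))]
    rw [Finset.card_univ, Fintype.card_fin]
    exact Finset.sum_congr rfl fun k _ => by rw [nsmul_eq_mul]
  have hterm : ∀ k ∈ Finset.range (n + 1),
      ((n.choose k : ℝ)) * (2 * 2 ^ K * Real.exp (-(((k : ℝ) + m) ^ 2) / 10 ^ 6))
      ≤ 2 * 2 ^ K * Real.exp (-((m:ℝ) ^ 2) / 10 ^ 6) := by
    intro k _
    have hch : ((n.choose k : ℝ)) ≤ Real.exp ((k : ℝ) * ((m : ℝ) / 10 ^ 8)) := by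
      calc ((n.choose k : ℝ)) ≤ (n : ℝ) ^ k := by exact_mod_cast Nat.choose_le_pow n k
        _ ≤ Real.exp ((m : ℝ) / 10 ^ 8) ^ k := by
            exact pow_le_pow_left₀ (Nat.cast_nonneg n) hns k
        _ = Real.exp ((k : ℝ) * ((m : ℝ) / 10 ^ 8)) := by
            rw [← Real.exp_nat_mul]
    have hk0 : (0:ℝ) ≤ (k:ℝ) := Nat.cast_nonneg k
    calc ((n.choose k : ℝ)) * (2 * 2 ^ K * Real.exp (-(((k : ℝ) + m) ^ 2) / 10 ^ 6))
        ≤ Real.exp ((k : ℝ) * ((m : ℝ) / 10 ^ 8))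
            * (2 * 2 ^ K * Real.exp (-(((k : ℝ) + m) ^ 2) / 10 ^ 6)) := by
          refine mul_le_mul_of_nonneg_right hch (by positivity)
      _ = 2 * 2 ^ K * (Real.exp ((k : ℝ) * ((m : ℝ) / 10 ^ 8))
            * Real.exp (-(((k : ℝ) + m) ^ 2) / 10 ^ 6)) := by ring
      _ = 2 * 2 ^ K * Real.exp ((k : ℝ) * ((m : ℝ) / 10 ^ 8) + -(((k : ℝ) + m) ^ 2) / 10 ^ 6) := by
          rw [← Real.exp_add]
      _ ≤ 2 * 2 ^ K * Real.exp (-((m:ℝ) ^ 2) / 10 ^ 6) := by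
          refine mul_le_mul_of_nonneg_left (Real.exp_le_exp.mpr ?_) (by positivity)
          nlinarith [sq_nonneg (k:ℝ), mul_nonneg hk0 (le_trans (by norm_num) hmR)]
  have hb4 : (bad.card : ℝ) ≤ ((n:ℝ) + 1) * (2 * 2 ^ K * Real.exp (-((m:ℝ) ^ 2) / 10 ^ 6)) := by
    refine (hb2.trans (le_of_eq hb3)).trans ?_
    calc ∑ k ∈ Finset.range (n + 1),
        ((n.choose k : ℝ)) * (2 * 2 ^ K * Real.exp (-(((k : ℝ) + m) ^ 2) / 10 ^ 6))
        ≤ ∑ _k ∈ Finset.range (n + 1), 2 * 2 ^ K * Real.exp (-((m:ℝ) ^ 2) / 10 ^ 6) :=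
          Finset.sum_le_sum hterm
      _ = ((n:ℝ) + 1) * (2 * 2 ^ K * Real.exp (-((m:ℝ) ^ 2) / 10 ^ 6)) := by
          rw [Finset.sum_const, Finset.card_range, nsmul_eq_mul]
          push_cast; ring
  have hsmall : ((n:ℝ) + 1) * (2 * Real.exp (-((m:ℝ) ^ 2) / 10 ^ 6)) < 1 := by
    have h4 : (4:ℝ) ≤ Real.exp 2 := by
      have h1 : (2:ℝ) ≤ Real.exp 1 := by
        have := Real.add_one_le_exp (1:ℝ)
        linarith
      calc (4:ℝ) = 2 * 2 := by norm_num
        _ ≤ Real.exp 1 * Real.exp 1 := by nlinarith [Real.exp_pos (1:ℝ)]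
        _ = Real.exp 2 := by rw [← Real.exp_add]; norm_num
    have hn2 : ((n:ℝ) + 1) ≤ 2 * Real.exp ((m : ℝ) / 10 ^ 8) := by
      have hn1' : (1:ℝ) ≤ (n:ℝ) := by exact_mod_cast hn1
      linarith
    have key : ((n:ℝ) + 1) * (2 * Real.exp (-((m:ℝ) ^ 2) / 10 ^ 6))
        ≤ Real.exp (2 + ((m : ℝ) / 10 ^ 8 + -((m:ℝ) ^ 2) / 10 ^ 6)) := by
      calc ((n:ℝ) + 1) * (2 * Real.exp (-((m:ℝ) ^ 2) / 10 ^ 6))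
          ≤ (2 * Real.exp ((m : ℝ) / 10 ^ 8)) * (2 * Real.exp (-((m:ℝ) ^ 2) / 10 ^ 6)) :=
            mul_le_mul_of_nonneg_right hn2 (by positivity)
        _ = 4 * (Real.exp ((m : ℝ) / 10 ^ 8) * Real.exp (-((m:ℝ) ^ 2) / 10 ^ 6)) := by ring
        _ = 4 * Real.exp ((m : ℝ) / 10 ^ 8 + -((m:ℝ) ^ 2) / 10 ^ 6) := by rw [← Real.exp_add]
        _ ≤ Real.exp 2 * Real.exp ((m : ℝ) / 10 ^ 8 + -((m:ℝ) ^ 2) / 10 ^ 6) :=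
            mul_le_mul_of_nonneg_right h4 (by positivity)
        _ = Real.exp (2 + ((m : ℝ) / 10 ^ 8 + -((m:ℝ) ^ 2) / 10 ^ 6)) := by rw [← Real.exp_add]
    have hend : Real.exp (2 + ((m : ℝ) / 10 ^ 8 + -((m:ℝ) ^ 2) / 10 ^ 6)) < 1 := by
      have hneg : 2 + ((m : ℝ) / 10 ^ 8 + -((m:ℝ) ^ 2) / 10 ^ 6) < 0 := by nlinarith
      have := Real.exp_lt_exp.mpr hneg
      simpa [Real.exp_zero] using this
    exact lt_of_le_of_lt key hend
  have hlt : (bad.card : ℝ) < ((univ : Finset (Fin n × Fin n → Bool)).card : ℝ) := by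
    have hcu : ((univ : Finset (Fin n × Fin n → Bool)).card : ℝ) = 2 ^ K := by
      rw [Finset.card_univ, hK, Fintype.card_fun]
      norm_num
    rw [hcu]
    have h2K : (0:ℝ) < 2 ^ K := by positivity
    calc (bad.card : ℝ) ≤ ((n:ℝ) + 1) * (2 * 2 ^ K * Real.exp (-((m:ℝ) ^ 2) / 10 ^ 6)) := hb4
      _ = (((n:ℝ) + 1) * (2 * Real.exp (-((m:ℝ) ^ 2) / 10 ^ 6))) * 2 ^ K := by ring
      _ < 1 * 2 ^ K := by exact mul_lt_mul_of_pos_right hsmall h2K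
      _ = 2 ^ K := by ring
  have hne : bad ≠ univ := by
    intro h
    rw [h] at hlt
    exact lt_irrefl _ hlt
  have hex : ∃ ω : Fin n × Fin n → Bool, ω ∉ bad := by
    by_contra h
    push_neg at h
    exact hne (Finset.eq_univ_iff_forall.mpr h)
  obtain ⟨ω, hω⟩ := hex
  refine ⟨ω, fun S => ?_⟩
  rw [hbad, Finset.mem_filter] at hω
  push_neg at hω
  exact hω (mem_univ ω) S

/-! ### From sets to weights -/

/-- elementary factor -/
def bse (w : Fin n → ℝ) (i : Fin n) (b : Bool) : ℝ := if b then w i else 1 - w i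

/-- product weight of a boolean vector -/
def Wt (w : Fin n → ℝ) (g : Fin n → Bool) : ℝ := ∏ i, bse w i (g i)

/-- indicator -/
def ind (b : Bool) : ℝ := if b then 1 else 0

lemma Wt_nonneg {w : Fin n → ℝ} (hw : ∀ i, w i ∈ Set.Icc (0:ℝ) 1) (g : Fin n → Bool) :
    0 ≤ Wt w g := by
  refine Finset.prod_nonneg fun i _ => ?_
  cases h : g i <;> simp [bse] <;> [linarith [(hw i).2]; exact (hw i).1]

lemma sum_Wt_ind (w : Fin n → ℝ) (i0 : Fin n) :
    ∑ g : Fin n → Bool, Wt w g * ind (g i0) = w i0 := by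
  have hpt : ∀ g : Fin n → Bool,
      Wt w g * ind (g i0) = ∏ i, (bse w i (g i) * (if i = i0 then ind (g i) else 1)) := by
    intro g
    rw [Finset.prod_mul_distrib, Finset.prod_ite_eq' Finset.univ i0 (fun i => ind (g i)),
      if_pos (Finset.mem_univ i0)]
    rfl
  rw [Finset.sum_congr rfl fun g _ => hpt g,
    cube_sum (f := fun i b => bse w i b * (if i = i0 then ind b else 1))]
  have hfac : ∀ i, (bse w i true * (if i = i0 then ind true else 1))
      + (bse w i false * (if i = i0 then ind false else 1)) = if i = i0 then w i else 1 := by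
    intro i
    by_cases h : i = i0 <;> simp [bse, ind, h]
  rw [Finset.prod_congr rfl fun i _ => hfac i,
    Finset.prod_ite_eq' Finset.univ i0 (fun i => w i), if_pos (Finset.mem_univ i0)]

lemma sum_Wt_ind2 (w : Fin n → ℝ) (i0 j0 : Fin n) (hij : i0 ≠ j0) :
    ∑ g : Fin n → Bool, Wt w g * (ind (g i0) * ind (g j0)) = w i0 * w j0 := by
  have hpt : ∀ g : Fin n → Bool,
      Wt w g * (ind (g i0) * ind (g j0))
        = ∏ i, (bse w i (g i) * ((if i = i0 then ind (g i) else 1)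
            * (if i = j0 then ind (g i) else 1))) := by
    intro g
    rw [Finset.prod_mul_distrib, Finset.prod_mul_distrib,
      Finset.prod_ite_eq' Finset.univ i0 (fun i => ind (g i)),
      Finset.prod_ite_eq' Finset.univ j0 (fun i => ind (g i)),
      if_pos (Finset.mem_univ i0), if_pos (Finset.mem_univ j0)]
    rfl
  rw [Finset.sum_congr rfl fun g _ => hpt g,
    cube_sum (f := fun i b => bse w i b * ((if i = i0 then ind b else 1)
      * (if i = j0 then ind b else 1)))]
  have hfac : ∀ i, (bse w i true * ((if i = i0 then ind true else 1) * (if i = j0 then ind true else 1)))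
      + (bse w i false * ((if i = i0 then ind false else 1) * (if i = j0 then ind false else 1)))
      = (if i = i0 then w i else 1) * (if i = j0 then w i else 1) := by
    intro i
    by_cases h1 : i = i0 <;> by_cases h2 : i = j0
    · exact absurd (h1.symm.trans h2) hij
    · simp [bse, ind, h1, h2, hij]
    · simp [bse, ind, h1, h2, Ne.symm hij]
    · simp [bse, ind, h1, h2]
  rw [Finset.prod_congr rfl fun i _ => hfac i, Finset.prod_mul_distrib,
    Finset.prod_ite_eq' Finset.univ i0 (fun i => w i),
    Finset.prod_ite_eq' Finset.univ j0 (fun i => w i),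
    if_pos (Finset.mem_univ i0), if_pos (Finset.mem_univ j0)]

lemma main_ineq (m : ℕ) (hm : 10 ^ 9 ≤ m) (ω : Fin n × Fin n → Bool)
    (hgood : ∀ S : Finset (Fin n), |X ω S| ≤ tf m S.card)
    (w : Fin n → ℝ) (hw : ∀ i, w i ∈ Set.Icc (0 : ℝ) 1) (hx : (m : ℝ) ≤ ∑ i, w i) (col : Bool) :
    (∑ i, ∑ j, if i < j ∧ ω (if i ≤ j then (i, j) else (j, i)) = col then w i * w j else 0)
      < 0.51 * ((∑ i, w i) * ((∑ i, w i) - 1) / 2) := by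
  classical
  set x := ∑ i, w i with hxdef
  have hw0 : ∀ i, 0 ≤ w i := fun i => (hw i).1
  have hmR : (10:ℝ) ^ 9 ≤ (m:ℝ) := by exact_mod_cast hm
  have hx9 : (10:ℝ) ^ 9 ≤ x := le_trans hmR hx
  have hx1 : (1:ℝ) ≤ x := le_trans (by norm_num) hx9
  have hx0 : (0:ℝ) ≤ x := le_trans (by norm_num) hx1
  set P : Finset (Fin n × Fin n) :=
    (univ : Finset (Fin n × Fin n)).filter (fun p => p.1 < p.2) with hP
  set T := ∑ p ∈ P, w p.1 * w p.2 with hT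
  set D := ∑ p ∈ P, sg (ω p) * (w p.1 * w p.2) with hD
  -- Step A : rewrite the left-hand side
  have hA : (∑ i, ∑ j, if i < j ∧ ω (if i ≤ j then (i, j) else (j, i)) = col
        then w i * w j else 0)
      = (T + sg col * D) / 2 := by
    rw [← Finset.sum_product', Finset.univ_product_univ]
    have h2 : ∀ p : Fin n × Fin n,
        (if p.1 < p.2 ∧ ω (if p.1 ≤ p.2 then (p.1, p.2) else (p.2, p.1)) = col
          then w p.1 * w p.2 else 0)
        = if p.1 < p.2 then (if ω p = col then w p.1 * w p.2 else 0) else 0 := by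
      intro p
      by_cases hlt : p.1 < p.2
      · have hpp : (if p.1 ≤ p.2 then (p.1, p.2) else (p.2, p.1)) = p := by
          rw [if_pos hlt.le]
        rw [hpp]
        simp [hlt]
      · simp [hlt]
    rw [Finset.sum_congr rfl fun p _ => h2 p, ← Finset.sum_filter]
    have h3 : ∀ p : Fin n × Fin n, (if ω p = col then w p.1 * w p.2 else 0)
        = (w p.1 * w p.2 + sg col * (sg (ω p) * (w p.1 * w p.2))) / 2 := by
      intro p
      cases hb : ω p <;> cases col <;> simp [sg] <;> ring
    rw [Finset.sum_congr rfl fun p _ => h3 p, ← Finset.sum_div, Finset.sum_add_distrib,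
      ← Finset.mul_sum]
  -- Step B : T + T ≤ x *x
  have hxx : ∑ p ∈ (univ : Finset (Fin n × Fin n)), w p.1 * w p.2 = x * x := by
    rw [← Finset.univ_product_univ, Finset.sum_product]
    exact (Finset.sum_mul_sum univ univ w w).symm
  have hB : T + T ≤ x * x := by
    have hPmap : ((univ : Finset (Fin n × Fin n)).filter fun p => p.2 < p.1)
        = P.map ⟨Prod.swap, Prod.swap_injective⟩ := by
      ext p
      rw [Finset.mem_filter, Finset.mem_map]
      constructor
      · intro h
        refine ⟨p.swap, ?_, Prod.swap_swap p⟩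
        rw [hP, Finset.mem_filter]
        exact ⟨Finset.mem_univ _, h.2⟩
      · rintro ⟨q, hq, rfl⟩
        rw [hP, Finset.mem_filter] at hq
        exact ⟨Finset.mem_univ _, hq.2⟩
    have hswap : ∑ p ∈ (univ : Finset (Fin n × Fin n)).filter (fun p => p.2 < p.1),
        w p.1 * w p.2 = T := by
      rw [hPmap, Finset.sum_map, hT]
      refine Finset.sum_congr rfl fun p _ => ?_
      simp [mul_comm]
    have hdisj : Disjoint P ((univ : Finset (Fin n × Fin n)).filter fun p => p.2 < p.1) := by
      rw [Finset.disjoint_left]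
      intro p hp hp'
      rw [hP, Finset.mem_filter] at hp
      rw [Finset.mem_filter] at hp'
      exact absurd hp'.2 (lt_asymm hp.2)
    have hcup := Finset.sum_union hdisj (f := fun p => w p.1 * w p.2)
    have hle : ∑ p ∈ P ∪ ((univ : Finset (Fin n × Fin n)).filter fun p => p.2 < p.1),
        w p.1 * w p.2 ≤ ∑ p ∈ (univ : Finset (Fin n × Fin n)), w p.1 * w p.2 :=
      Finset.sum_le_sum_of_subset_of_nonneg (Finset.subset_univ _)
        (fun p _ _ => mul_nonneg (hw0 _) (hw0 _))
    rw [hxx] at hle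
    rw [hcup, hswap] at hle
    rw [hT] at hle ⊢
    linarith
  -- Step C : |D| is small
  have hDform : D = ∑ g : Fin n → Bool,
      Wt w g * (∑ p ∈ P, sg (ω p) * (ind (g p.1) * ind (g p.2))) := by
    rw [hD]
    have hpt : ∀ p ∈ P, sg (ω p) * (w p.1 * w p.2)
        = ∑ g : Fin n → Bool, sg (ω p) * (Wt w g * (ind (g p.1) * ind (g p.2))) := by
      intro p hp
      rw [hP, Finset.mem_filter] at hp
      have hne : p.1 ≠ p.2 := ne_of_lt hp.2
      rw [← Finset.mul_sum, sum_Wt_ind2 w p.1 p.2 hne]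
    rw [Finset.sum_congr rfl hpt, Finset.sum_comm]
    refine Finset.sum_congr rfl fun g _ => ?_
    rw [Finset.mul_sum]
    exact Finset.sum_congr rfl fun p _ => by ring
  set k : (Fin n → Bool) → ℕ := fun g => ((univ : Finset (Fin n)).filter fun i => g i = true).card
    with hkdef
  have hkind : ∀ g : Fin n → Bool, ((k g : ℝ)) = ∑ i, ind (g i) := by
    intro g
    show (((univ : Finset (Fin n)).filter fun i => g i = true).card : ℝ) = ∑ i, ind (g i)
    rw [Finset.card_filter]
    push_cast
    exact Finset.sum_congr rfl fun i _ => by cases h : g i <;> simp [ind, h]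
  have hYX : ∀ g : Fin n → Bool, (∑ p ∈ P, sg (ω p) * (ind (g p.1) * ind (g p.2)))
      = X ω ((univ : Finset (Fin n)).filter fun i => g i = true) := by
    intro g
    rw [X]
    have hps : pairs ((univ : Finset (Fin n)).filter fun i : Fin n => g i = true)
        = P.filter (fun p => g p.1 = true ∧ g p.2 = true) := by
      ext p
      rw [pairs, Finset.mem_filter, Finset.mem_product, Finset.mem_filter, Finset.mem_filter,
        Finset.mem_filter, hP, Finset.mem_filter]
      constructor
      · rintro ⟨⟨⟨-, h1⟩, -, h2⟩, hlt⟩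
        exact ⟨⟨Finset.mem_univ _, hlt⟩, h1, h2⟩
      · rintro ⟨⟨-, hlt⟩, h1, h2⟩
        exact ⟨⟨⟨Finset.mem_univ _, h1⟩, Finset.mem_univ _, h2⟩, hlt⟩
    have hsf := Finset.sum_filter (s := P)
      (fun p : Fin n × Fin n => g p.1 = true ∧ g p.2 = true) (fun p => sg (ω p))
    rw [hps, hsf]
    refine Finset.sum_congr rfl fun p _ => ?_
    by_cases h1 : g p.1 <;> by_cases h2 : g p.2 <;> simp [ind, h1, h2]
  have habsY : ∀ g : Fin n → Bool,
      |∑ p ∈ P, sg (ω p) * (ind (g p.1) * ind (g p.2))| ≤ tf m (k g) := by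
    intro g
    rw [hYX g]
    exact hgood _
  have hWnn : ∀ g : Fin n → Bool, 0 ≤ Wt w g := fun g => Wt_nonneg hw g
  have hEk : ∑ g : Fin n → Bool, Wt w g * (k g : ℝ) = x := by
    calc ∑ g : Fin n → Bool, Wt w g * (k g : ℝ)
        = ∑ g : Fin n → Bool, ∑ i, Wt w g * ind (g i) := by
          refine Finset.sum_congr rfl fun g _ => ?_
          rw [hkind g, Finset.mul_sum]
      _ = ∑ i, ∑ g : Fin n → Bool, Wt w g * ind (g i) := Finset.sum_comm
      _ = ∑ i, w i := Finset.sum_congr rfl fun i _ => sum_Wt_ind w i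
  have hpair : ∀ i j : Fin n, ∑ g : Fin n → Bool, Wt w g * (ind (g i) * ind (g j))
      ≤ w i * w j + (if i = j then w i else 0) := by
    intro i j
    by_cases h : i = j
    · subst h
      have hii : ∀ g : Fin n → Bool, Wt w g * (ind (g i) * ind (g i)) = Wt w g * ind (g i) := by
        intro g; cases hgi : g i <;> simp [ind, hgi]
      rw [Finset.sum_congr rfl fun g _ => hii g, sum_Wt_ind w i, if_pos rfl]
      nlinarith [hw0 i]
    · rw [sum_Wt_ind2 w i j h, if_neg h]
      simp
  have hEk2 : ∑ g : Fin n → Bool, Wt w g * ((k g : ℝ) * (k g : ℝ)) ≤ x * x + x := by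
    have hexp : ∀ g : Fin n → Bool, Wt w g * ((k g : ℝ) * (k g : ℝ))
        = ∑ i, ∑ j, Wt w g * (ind (g i) * ind (g j)) := by
      intro g
      rw [hkind g, Finset.sum_mul_sum, Finset.mul_sum]
      refine Finset.sum_congr rfl fun i _ => ?_
      rw [Finset.mul_sum]
    calc ∑ g : Fin n → Bool, Wt w g * ((k g : ℝ) * (k g : ℝ))
        = ∑ g : Fin n → Bool, ∑ i, ∑ j, Wt w g * (ind (g i) * ind (g j)) :=
          Finset.sum_congr rfl fun g _ => hexp g
      _ = ∑ i, ∑ g : Fin n → Bool, ∑ j, Wt w g * (ind (g i) * ind (g j)) := Finset.sum_comm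
      _ = ∑ i, ∑ j, ∑ g : Fin n → Bool, Wt w g * (ind (g i) * ind (g j)) :=
          Finset.sum_congr rfl fun i _ => Finset.sum_comm
      _ ≤ ∑ i, ∑ j, (w i * w j + if i = j then w i else 0) :=
          Finset.sum_le_sum fun i _ => Finset.sum_le_sum fun j _ => hpair i j
      _ = (∑ i, ∑ j, w i * w j) + ∑ i, ∑ j, (if i = j then w i else 0) := by
          rw [← Finset.sum_add_distrib]
          exact Finset.sum_congr rfl fun i _ => Finset.sum_add_distrib
      _ = x * x + x := by
          congr 1
          · calc ∑ i, ∑ j, w i * w j = ∑ i, w i * x := by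
                  refine Finset.sum_congr rfl fun i _ => ?_
                  rw [← Finset.mul_sum]
              _ = x * x := by rw [← Finset.sum_mul]
          · refine Finset.sum_congr rfl fun i _ => ?_
            simp
  have hDle : |D| ≤ (x * x + x + (m:ℝ) * x) / 1000 := by
    rw [hDform]
    calc |∑ g : Fin n → Bool, Wt w g * (∑ p ∈ P, sg (ω p) * (ind (g p.1) * ind (g p.2)))|
        ≤ ∑ g : Fin n → Bool,
            |Wt w g * (∑ p ∈ P, sg (ω p) * (ind (g p.1) * ind (g p.2)))| :=
          Finset.abs_sum_le_sum_abs _ _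
      _ = ∑ g : Fin n → Bool,
            Wt w g * |∑ p ∈ P, sg (ω p) * (ind (g p.1) * ind (g p.2))| := by
          refine Finset.sum_congr rfl fun g _ => ?_
          rw [abs_mul, abs_of_nonneg (hWnn g)]
      _ ≤ ∑ g : Fin n → Bool, Wt w g * tf m (k g) :=
          Finset.sum_le_sum fun g _ => mul_le_mul_of_nonneg_left (habsY g) (hWnn g)
      _ = (∑ g : Fin n → Bool, Wt w g * ((k g : ℝ) * (k g : ℝ))
            + (m:ℝ) * ∑ g : Fin n → Bool, Wt w g * (k g : ℝ)) / 1000 := by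
          rw [Finset.mul_sum, ← Finset.sum_add_distrib, Finset.sum_div]
          refine Finset.sum_congr rfl fun g _ => ?_
          rw [tf]
          ring
      _ ≤ (x * x + x + (m:ℝ) * x) / 1000 := by
          rw [hEk]
          have := hEk2
          linarith
  have hDle' : |D| ≤ 3 * (x * x) / 1000 := by
    refine hDle.trans ?_
    have h1 : x ≤ x * x := by nlinarith
    have h2 : (m:ℝ) * x ≤ x * x := mul_le_mul_of_nonneg_right hx hx0
    linarith
  have hsgD : sg col * D ≤ |D| := by
    calc sg col * D ≤ |sg col * D| := le_abs_self _
      _ = |D| := by rw [abs_mul, abs_sg, one_mul]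
  rw [hA]
  calc (T + sg col * D) / 2 ≤ (x * x / 2 + 3 * (x * x) / 1000) / 2 := by linarith
    _ < 0.51 * (x * (x - 1) / 2) := by
        nlinarith [mul_le_mul_of_nonneg_right hx9 hx0]

end GRR

/-- **Graham–Rödl–Ruciński coloring.**  For `m ≥ 10⁹` and `s = ⌊2^(10⁻⁸·m)⌋` there is a
partition of the edges of `K_s` into two classes (represented by a symmetric `Bool`-valued
coloring `c` of pairs) such that for every weight function `w : [s] → [0,1]` with total
weight `x = Σ w(i) ≥ m` and each class, the weight of that class,
`Σ_{ij in the class} w(i)·w(j)`, is less than `0.51·x(x−1)/2`. -/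
theorem stmt_2 (m : ℕ) (hm : 10 ^ 9 ≤ m) :
    ∃ c : Fin (sBound m) → Fin (sBound m) → Bool,
      (∀ i j, c i j = c j i) ∧
      ∀ w : Fin (sBound m) → ℝ, (∀ i, w i ∈ Set.Icc (0 : ℝ) 1) → (m : ℝ) ≤ ∑ i, w i →
        ∀ col : Bool,
          (∑ i, ∑ j, if i < j ∧ c i j = col then w i * w j else 0)
            < 0.51 * ((∑ i, w i) * ((∑ i, w i) - 1) / 2) := by
  have hm1 : 1 ≤ sBound m := by
    rw [sBound]
    refine Nat.le_floor ?_
    rw [Nat.cast_one]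
    have h0 : (2:ℝ) ^ (0:ℝ) ≤ (2:ℝ) ^ ((m : ℝ) / 10 ^ 8) :=
      Real.rpow_le_rpow_of_exponent_le (by norm_num) (by positivity)
    rwa [Real.rpow_zero] at h0
  have hns : ((sBound m : ℕ) : ℝ) ≤ Real.exp ((m : ℝ) / 10 ^ 8) := by
    rw [sBound]
    refine (Nat.floor_le (by positivity)).trans ?_
    rw [Real.rpow_def_of_pos (by norm_num : (0:ℝ) < 2)]
    refine Real.exp_le_exp.mpr ?_
    have hl2 : Real.log 2 ≤ 1 := by
      have := Real.log_le_sub_one_of_pos (by norm_num : (0:ℝ) < 2)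
      linarith
    have he : (0:ℝ) ≤ (m : ℝ) / 10 ^ 8 := by positivity
    nlinarith
  obtain ⟨ω, hgood⟩ := GRR.exists_good (n := sBound m) m hm hm1 hns
  refine ⟨fun i j => ω (if i ≤ j then (i, j) else (j, i)), fun i j => ?_, fun w hw hx col => ?_⟩
  · show ω (if i ≤ j then (i, j) else (j, i)) = ω (if j ≤ i then (j, i) else (i, j))
    rcases lt_trichotomy i j with h | h | h
    · rw [if_pos h.le, if_neg (not_le.mpr h)]
    · subst h; rfl
    · rw [if_neg (not_le.mpr h), if_pos h.le]
  · exact GRR.main_ineq m hm ω hgood w hw hx col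
end

section
/- Let ℓ ≤ r be integers and let x_ℓ ≤ x_{ℓ+1} ≤ … ≤ x_{r+1} be nonnegative integers with x_ℓ < x_{r+1}. Then max_{ℓ ≤ i ≤ r} δ(x_i, x_{i+1}) = δ(x_ℓ, x_{r+1}) ≥ 1, and there is exactly one index i* ∈ {ℓ, …, r} with δ(x_{i*}, x_{i*+1}) = δ(x_ℓ, x_{r+1}); moreover δ(x_j, x_{j+1}) < δ(x_ℓ, x_{r+1}) for every other j ∈ {ℓ, …, r}. -/
/-- `bitfn x i` is the coefficient `a_{i-1}` in the binary representation
`x = Σ_{i≥0} a_i 2^i`. -/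
def bitfn (x i : ℕ) : ℕ := x / 2 ^ (i - 1) % 2

/-- `deltafn x y = max { i ≥ 1 | bit(x,i) ≠ bit(y,i) }`, with `deltafn x x = 0`
(the set is then empty and `sSup ∅ = 0` in `ℕ`). -/
noncomputable def deltafn (x y : ℕ) : ℕ := sSup {i : ℕ | 1 ≤ i ∧ bitfn x i ≠ bitfn y i}

lemma bitfn_ne_iff (x y i : ℕ) :
    bitfn x i ≠ bitfn y i ↔ (x ^^^ y).testBit (i - 1) = true := by
  rw [Nat.testBit_xor, Nat.testBit_eq_decide_div_mod_eq, Nat.testBit_eq_decide_div_mod_eq]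
  rcases Nat.mod_two_eq_zero_or_one (x / 2 ^ (i - 1)) with h | h <;>
    rcases Nat.mod_two_eq_zero_or_one (y / 2 ^ (i - 1)) with h' | h' <;>
    simp [bitfn, h, h']

lemma deltafn_self (x : ℕ) : deltafn x x = 0 := by
  have : {i : ℕ | 1 ≤ i ∧ bitfn x i ≠ bitfn x i} = ∅ := by simp
  simp [deltafn, this]

lemma deltafn_eq_of_ne {x y : ℕ} (h : x ≠ y) :
    deltafn x y = (x ^^^ y).log2 + 1 := by
  set n := x ^^^ y with hn
  have hn0 : n ≠ 0 := fun h0 => h (xor_eq_zero_iff.mp h0)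
  have htop : n.testBit n.log2 = true := by
    have h1 : 2 ^ n.log2 ≤ n := Nat.log2_self_le hn0
    have h2 : n < 2 ^ (n.log2 + 1) := (Nat.log2_lt hn0).mp (Nat.lt_succ_self _)
    have hdiv : n / 2 ^ n.log2 = 1 := by
      have h2' : n < 2 * 2 ^ n.log2 := by
        rw [← pow_succ']; exact h2
      have hge : 1 ≤ n / 2 ^ n.log2 := (Nat.one_le_div_iff
        (pow_pos (by norm_num) _)).mpr h1
      have hlt : n / 2 ^ n.log2 < 2 := (Nat.div_lt_iff_lt_mul
        (pow_pos (by norm_num) _)).mpr h2'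
      omega
    simp [Nat.testBit_eq_decide_div_mod_eq, hdiv]
  have hhigh : ∀ i, n.log2 < i → n.testBit i = false := by
    intro i hi
    exact Nat.testBit_lt_two_pow (lt_of_lt_of_le ((Nat.log2_lt hn0).mp (Nat.lt_succ_self _))
      (Nat.pow_le_pow_right (by norm_num) hi))
  have hmem : n.log2 + 1 ∈ {i : ℕ | 1 ≤ i ∧ bitfn x i ≠ bitfn y i} := by
    refine ⟨by omega, ?_⟩
    rw [bitfn_ne_iff]; simp only [Nat.add_sub_cancel]; exact htop
  have hub : ∀ i ∈ {i : ℕ | 1 ≤ i ∧ bitfn x i ≠ bitfn y i}, i ≤ n.log2 + 1 := by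
    rintro i ⟨hi1, hi2⟩
    by_contra hgt
    push_neg at hgt
    rw [bitfn_ne_iff] at hi2
    rw [hhigh (i - 1) (by omega)] at hi2
    simp at hi2
  exact le_antisymm (csSup_le ⟨_, hmem⟩ hub) (le_csSup ⟨n.log2 + 1, hub⟩ hmem)

lemma deltafn_pos {x y : ℕ} (h : x ≠ y) : 1 ≤ deltafn x y := by
  rw [deltafn_eq_of_ne h]; omega

/-- Key lemma: for `a ≤ b ≤ c` with `a < c`, exactly one of `δ(a,b)`, `δ(b,c)` equals
`δ(a,c)` and the other is strictly smaller. -/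
lemma deltafn_key {a b c : ℕ} (hab : a ≤ b) (hbc : b ≤ c) (hac : a < c) :
    (deltafn a b = deltafn a c ∧ deltafn b c < deltafn a c) ∨
    (deltafn a b < deltafn a c ∧ deltafn b c = deltafn a c) := by
  have hacne : a ≠ c := Nat.ne_of_lt hac
  set k := (a ^^^ c).log2 with hk
  have hD : deltafn a c = k + 1 := deltafn_eq_of_ne hacne
  have hn0 : a ^^^ c ≠ 0 := fun h0 => hacne (xor_eq_zero_iff.mp h0)
  -- bits of a and c agree above k
  have hhigh : ∀ i, k < i → a.testBit i = c.testBit i := by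
    intro i hi
    have : (a ^^^ c).testBit i = false :=
      Nat.testBit_lt_two_pow (lt_of_lt_of_le ((Nat.log2_lt hn0).mp (Nat.lt_succ_self _))
        (Nat.pow_le_pow_right (by norm_num) hi))
    rw [Nat.testBit_xor] at this
    cases ha : a.testBit i <;> cases hc : c.testBit i <;> simp_all
  -- bit k of a^^^c is true
  have htop : (a ^^^ c).testBit k = true := by
    have h1 : 2 ^ k ≤ a ^^^ c := Nat.log2_self_le hn0
    have h2 : a ^^^ c < 2 ^ (k + 1) := (Nat.log2_lt hn0).mp (Nat.lt_succ_self _)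
    have hdiv : (a ^^^ c) / 2 ^ k = 1 := by
      have h2' : a ^^^ c < 2 * 2 ^ k := by rw [← pow_succ']; exact h2
      have hge : 1 ≤ (a ^^^ c) / 2 ^ k :=
        (Nat.one_le_div_iff (pow_pos (by norm_num) _)).mpr h1
      have hlt : (a ^^^ c) / 2 ^ k < 2 :=
        (Nat.div_lt_iff_lt_mul (pow_pos (by norm_num) _)).mpr h2'
      omega
    simp [Nat.testBit_eq_decide_div_mod_eq, hdiv]
  have hne_k : a.testBit k ≠ c.testBit k := by
    rw [Nat.testBit_xor] at htop
    intro h; rw [h] at htop; simp at htop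
  have hak : a.testBit k = false ∧ c.testBit k = true := by
    cases ha : a.testBit k <;> cases hc : c.testBit k <;> simp_all
    · exact absurd (Nat.lt_of_testBit k hc ha (fun j hj => (hhigh j hj).symm))
        (by omega)
  -- bits of b agree with a (and c) above k
  have hbquot : b / 2 ^ (k + 1) = a / 2 ^ (k + 1) := by
    have hac' : a / 2 ^ (k + 1) = c / 2 ^ (k + 1) := by
      have : a >>> (k + 1) = c >>> (k + 1) := by
        apply Nat.eq_of_testBit_eq
        intro j
        rw [Nat.testBit_shiftRight, Nat.testBit_shiftRight]
        exact hhigh _ (by omega)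
      simpa [Nat.shiftRight_eq_div_pow] using this
    have h1 : a / 2 ^ (k + 1) ≤ b / 2 ^ (k + 1) := Nat.div_le_div_right hab
    have h2 : b / 2 ^ (k + 1) ≤ c / 2 ^ (k + 1) := Nat.div_le_div_right hbc
    omega
  have hbhigh : ∀ i, k < i → b.testBit i = a.testBit i := by
    intro i hi
    have hb' : b >>> (k + 1) = a >>> (k + 1) := by
      simpa [Nat.shiftRight_eq_div_pow] using hbquot
    have := congrArg (fun t => t.testBit (i - (k + 1))) hb'
    simpa [Nat.testBit_shiftRight, Nat.add_sub_cancel' (by omega : k + 1 ≤ i)] using this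
  cases hbk : b.testBit k with
  | true =>
    -- δ(a,b) = k+1, δ(b,c) ≤ k
    left
    have habne : a ≠ b := by
      intro h; rw [h, hbk] at hak; simp at hak
    have hxab0 : a ^^^ b ≠ 0 := fun h0 => habne (xor_eq_zero_iff.mp h0)
    have hge : 2 ^ k ≤ a ^^^ b := by
      apply Nat.ge_two_pow_of_testBit (i := k)
      rw [Nat.testBit_xor, hak.1, hbk]; rfl
    have hlt : a ^^^ b < 2 ^ (k + 1) := by
      apply Nat.lt_pow_two_of_testBit
      intro i hi
      rw [Nat.testBit_xor, hbhigh i (by omega)]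
      simp
    have hlog : (a ^^^ b).log2 = k := by
      have := (Nat.le_log2 hxab0).mpr hge
      have := (Nat.log2_lt hxab0).mpr hlt
      omega
    constructor
    · rw [deltafn_eq_of_ne habne, hlog, hD]
    · rcases eq_or_ne b c with h | hbcne
      · subst h; rw [deltafn_self, hD]; omega
      · have hxbc0 : b ^^^ c ≠ 0 := fun h0 => hbcne (xor_eq_zero_iff.mp h0)
        have hlt2 : b ^^^ c < 2 ^ k := by
          apply Nat.lt_pow_two_of_testBit
          intro i hi
          rcases eq_or_lt_of_le hi with rfl | hilt
          · rw [Nat.testBit_xor, hbk, hak.2]; rfl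
          · rw [Nat.testBit_xor, hbhigh i hilt, hhigh i hilt]; simp
        have : (b ^^^ c).log2 < k := (Nat.log2_lt hxbc0).mpr hlt2
        rw [deltafn_eq_of_ne hbcne, hD]; omega
  | false =>
    -- δ(b,c) = k+1, δ(a,b) ≤ k
    right
    have hbcne : b ≠ c := by
      intro h; rw [← h, hbk] at hak; simp at hak
    have hxbc0 : b ^^^ c ≠ 0 := fun h0 => hbcne (xor_eq_zero_iff.mp h0)
    have hge : 2 ^ k ≤ b ^^^ c := by
      apply Nat.ge_two_pow_of_testBit (i := k)
      rw [Nat.testBit_xor, hbk, hak.2]; rfl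
    have hlt : b ^^^ c < 2 ^ (k + 1) := by
      apply Nat.lt_pow_two_of_testBit
      intro i hi
      rw [Nat.testBit_xor, hbhigh i (by omega), hhigh i (by omega)]
      simp
    have hlog : (b ^^^ c).log2 = k := by
      have := (Nat.le_log2 hxbc0).mpr hge
      have := (Nat.log2_lt hxbc0).mpr hlt
      omega
    refine ⟨?_, by rw [deltafn_eq_of_ne hbcne, hlog, hD]⟩
    rcases eq_or_ne a b with h | habne
    · subst h; rw [deltafn_self, hD]; omega
    · have hxab0 : a ^^^ b ≠ 0 := fun h0 => habne (xor_eq_zero_iff.mp h0)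
      have hlt2 : a ^^^ b < 2 ^ k := by
        apply Nat.lt_pow_two_of_testBit
        intro i hi
        rcases eq_or_lt_of_le hi with rfl | hilt
        · rw [Nat.testBit_xor, hak.1, hbk]; rfl
        · rw [Nat.testBit_xor, hbhigh i hilt]; simp
      have : (a ^^^ b).log2 < k := (Nat.log2_lt hxab0).mpr hlt2
      rw [deltafn_eq_of_ne habne, hD]; omega

lemma chain_le (x : ℕ → ℕ) (l r : ℕ)
    (hmono : ∀ i, l ≤ i → i ≤ r → x i ≤ x (i + 1)) :
    ∀ i j, l ≤ i → i ≤ j → j ≤ r + 1 → x i ≤ x j := by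
  intro i j hli hij hjr
  induction j with
  | zero =>
    have hi0 : i = 0 := by omega
    exact le_of_eq (congrArg x hi0)
  | succ j ih =>
    rcases Nat.eq_or_lt_of_le hij with heq | hlt
    · exact le_of_eq (congrArg x heq)
    · exact le_trans (ih (by omega) (by omega)) (hmono j (by omega) (by omega))

/-- Let `ℓ ≤ r` and let `x_ℓ ≤ … ≤ x_{r+1}` be nonnegative integers with `x_ℓ < x_{r+1}`.
Then `max_{ℓ ≤ i ≤ r} δ(x_i, x_{i+1}) = δ(x_ℓ, x_{r+1})`, this maximum is attained at a
unique index `i* ∈ {ℓ,…,r}`, and `δ(x_j, x_{j+1}) < δ(x_ℓ, x_{r+1})` for every other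
`j ∈ {ℓ,…,r}`. -/
theorem stmt_6 (l r : ℕ) (hlr : l ≤ r) (x : ℕ → ℕ)
    (hmono : ∀ i, l ≤ i → i ≤ r → x i ≤ x (i + 1)) (hx : x l < x (r + 1)) :
    (Finset.Icc l r).sup (fun i => deltafn (x i) (x (i + 1))) = deltafn (x l) (x (r + 1)) ∧
    1 ≤ deltafn (x l) (x (r + 1)) ∧
    ∃ i ∈ Finset.Icc l r, deltafn (x i) (x (i + 1)) = deltafn (x l) (x (r + 1)) ∧
      ∀ j ∈ Finset.Icc l r, j ≠ i →
        deltafn (x j) (x (j + 1)) < deltafn (x l) (x (r + 1)) := by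
  induction r, hlr using Nat.le_induction with
  | base =>
    refine ⟨by simp, deltafn_pos (Nat.ne_of_lt hx), l, by simp, rfl, ?_⟩
    intro j hj hjne
    simp at hj
    exact absurd hj hjne
  | succ r hlr ih =>
    have hIcc : Finset.Icc l (r + 1) = insert (r + 1) (Finset.Icc l r) :=
      (Finset.insert_Icc_right_eq_Icc_add_one (by omega)).symm
    have hmono' : ∀ i, l ≤ i → i ≤ r → x i ≤ x (i + 1) :=
      fun i h1 h2 => hmono i h1 (by omega)
    rcases eq_or_ne (x (r + 1)) (x (r + 1 + 1)) with heq | hne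
    · -- last step is constant
      have hx' : x l < x (r + 1) := by rw [heq]; exact hx
      obtain ⟨hsup, hpos, i, hi, hieq, hiuniq⟩ := ih hmono' hx'
      have hDeq : deltafn (x l) (x (r + 1 + 1)) = deltafn (x l) (x (r + 1)) := by rw [← heq]
      have hlast : deltafn (x (r + 1)) (x (r + 1 + 1)) = 0 := by rw [← heq]; exact deltafn_self _
      refine ⟨?_, by rw [hDeq]; exact hpos, i, ?_, by rw [hDeq, hieq], ?_⟩
      · rw [hIcc, Finset.sup_insert, hDeq, hlast, ← hsup]
        simp
      · rw [hIcc]; exact Finset.mem_insert_of_mem hi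
      · intro j hj hjne
        rw [hIcc, Finset.mem_insert] at hj
        rcases hj with rfl | hj
        · rw [hlast, hDeq]; omega
        · rw [hDeq]; exact hiuniq j hj hjne
    · have hlast_lt : x (r + 1) < x (r + 1 + 1) :=
        lt_of_le_of_ne (hmono (r + 1) (by omega) le_rfl) hne
      have hab : x l ≤ x (r + 1) := chain_le x l r hmono' l (r + 1) le_rfl (by omega) le_rfl
      rcases eq_or_lt_of_le hab with heq2 | hlt2
      · -- all earlier steps constant, last step carries everything
        have hDeq : deltafn (x l) (x (r + 1 + 1)) = deltafn (x (r + 1)) (x (r + 1 + 1)) := by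
          rw [heq2]
        have hflat : ∀ j, l ≤ j → j ≤ r → x j = x (j + 1) := by
          intro j h1 h2
          have e1 : x l ≤ x j := chain_le x l r hmono' l j le_rfl h1 (by omega)
          have e2 : x j ≤ x (j + 1) := hmono' j h1 h2
          have e3 : x (j + 1) ≤ x (r + 1) :=
            chain_le x l r hmono' (j + 1) (r + 1) (by omega) (by omega) le_rfl
          omega
        have hpos : 1 ≤ deltafn (x l) (x (r + 1 + 1)) :=
          deltafn_pos (Nat.ne_of_lt hx)
        refine ⟨?_, hpos, r + 1, ?_, hDeq.symm, ?_⟩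
        · rw [hIcc, Finset.sup_insert, hDeq]
          have : (Finset.Icc l r).sup (fun i => deltafn (x i) (x (i + 1))) = 0 := by
            apply Nat.le_zero.mp
            apply Finset.sup_le
            intro j hj
            rw [Finset.mem_Icc] at hj
            rw [hflat j hj.1 hj.2, deltafn_self]
          rw [this]
          simp
        · rw [hIcc]; exact Finset.mem_insert_self _ _
        · intro j hj hjne
          rw [hIcc, Finset.mem_insert] at hj
          rcases hj with rfl | hj
          · exact absurd rfl hjne
          · rw [Finset.mem_Icc] at hj
            rw [hflat j hj.1 hj.2, deltafn_self]
            omega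
      · -- apply IH and the key lemma
        obtain ⟨hsup, hpos, i, hi, hieq, hiuniq⟩ := ih hmono' hlt2
        rcases deltafn_key hab (le_of_lt hlast_lt) hx with ⟨he1, he2⟩ | ⟨he1, he2⟩
        · -- max carried by the first part, witness i
          refine ⟨?_, by rw [← he1]; exact hpos, i, ?_, by rw [hieq, he1], ?_⟩
          · rw [hIcc, Finset.sup_insert, ← he1, ← hsup]
            have : deltafn (x (r + 1)) (x (r + 1 + 1)) ≤
                (Finset.Icc l r).sup (fun i => deltafn (x i) (x (i + 1))) := by
              rw [hsup, he1]
              omega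
            exact sup_eq_right.mpr this
          · rw [hIcc]; exact Finset.mem_insert_of_mem hi
          · intro j hj hjne
            rw [hIcc, Finset.mem_insert] at hj
            rcases hj with rfl | hj
            · exact he2
            · rw [← he1]; exact hiuniq j hj hjne
        · -- max carried by the last step, witness r+1
          refine ⟨?_, by rw [← he2]; exact deltafn_pos hne, r + 1, ?_, he2, ?_⟩
          · rw [hIcc, Finset.sup_insert, he2]
            have : (Finset.Icc l r).sup (fun i => deltafn (x i) (x (i + 1))) ≤
                deltafn (x l) (x (r + 1 + 1)) := by
              rw [hsup]; omega
            exact sup_eq_left.mpr this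
          · rw [hIcc]; exact Finset.mem_insert_self _ _
          · intro j hj hjne
            rw [hIcc, Finset.mem_insert] at hj
            rcases hj with rfl | hj
            · exact absurd rfl hjne
            · calc deltafn (x j) (x (j + 1)) ≤
                    (Finset.Icc l r).sup (fun i => deltafn (x i) (x (i + 1))) :=
                      Finset.le_sup (f := fun i => deltafn (x i) (x (i + 1))) hj
                _ = deltafn (x l) (x (r + 1)) := hsup
                _ < deltafn (x l) (x (r + 1 + 1)) := he1
end

section
/- For any integer k ≥ 1 and real ε > 0, there exist constants d = d(k,ε) and M_0 = M_0(k,ε) such that for all integers M ≥ M_0 there is a graph F on M vertices with maximum degree at most d satisfying: for every set U ⊆ V(F) with |U| ≥ ε·M, the number of vertices of F having fewer than k neighbors in U is at most ε·M. -/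
attribute [local instance] Classical.propDecidable

open Finset

namespace Stmt11

abbrev Omega (M : ℕ) := Fin M × Fin M → Fin M

def R (M C : ℕ) (ω : Omega M) (u v : Fin M) : Prop :=
  u ≠ v ∧ ((ω (u,v)).val < C ∨ (ω (v,u)).val < C)

noncomputable def HDeg (M C d : ℕ) (ω : Omega M) : Finset (Fin M) :=
  Finset.univ.filter (fun v => d < (Finset.univ.filter (fun u => R M C ω v u)).card)

def Graph (M C d : ℕ) (ω : Omega M) (H : Finset (Fin M)) : SimpleGraph (Fin M) where
  Adj u v := R M C ω u v ∧ u ∉ H ∧ v ∉ H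
  symm := by
    constructor
    rintro u v ⟨h1, h2, h3⟩
    exact ⟨⟨h1.1.symm, h1.2.symm⟩, h3, h2⟩
  loopless := by
    constructor
    rintro u ⟨h1, _⟩
    exact h1.1 rfl

lemma Graph_adj (M C d : ℕ) (ω : Omega M) (H : Finset (Fin M)) (u v : Fin M) :
    (Graph M C d ω H).Adj u v ↔ (R M C ω u v ∧ u ∉ H ∧ v ∉ H) := Iff.rfl


/-- number of values below the threshold C -/
lemma card_lt_thresh (M C : ℕ) (h : C ≤ M) :
    (Finset.univ.filter (fun x : Fin M => x.val < C)).card = C := by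
  have : (Finset.univ.filter (fun x : Fin M => x.val < C))
      = (Finset.range C).attachFin (fun m hm => lt_of_lt_of_le (Finset.mem_range.mp hm) h) := by
    ext x; simp [Finset.mem_attachFin]
  rw [this, Finset.card_attachFin, Finset.card_range]

lemma card_ge_thresh (M C : ℕ) (h : C ≤ M) :
    (Finset.univ.filter (fun x : Fin M => ¬ x.val < C)).card = M - C := by
  have := Finset.card_filter_add_card_filter_not (s := (Finset.univ : Finset (Fin M)))
    (p := fun x : Fin M => x.val < C)
  have h2 := card_lt_thresh M C h
  simp only [Finset.card_univ, Fintype.card_fin] at this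
  omega

/-- the master product counting lemma -/
lemma count_constrained (M : ℕ) (K : Finset (Fin M × Fin M)) (T : Fin M × Fin M → Finset (Fin M)) :
    (Finset.univ.filter (fun ω : Omega M => ∀ p ∈ K, ω p ∈ T p)).card
      = (∏ p ∈ K, (T p).card) * M ^ (M * M - K.card) := by
  have hset : (Finset.univ.filter (fun ω : Omega M => ∀ p ∈ K, ω p ∈ T p))
      = Fintype.piFinset (fun p => if p ∈ K then T p else Finset.univ) := by
    ext ω
    simp only [Finset.mem_filter, Finset.mem_univ, true_and, Fintype.mem_piFinset]
    constructor
    · intro h p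
      by_cases hp : p ∈ K <;> simp [hp, h p]
    · intro h p hp
      have := h p
      simpa [hp] using this
  rw [hset, Fintype.card_piFinset]
  rw [← Finset.prod_filter_mul_prod_filter_not Finset.univ (· ∈ K)]
  have h1 : Finset.univ.filter (· ∈ K) = K := by ext p; simp
  congr 1
  · rw [h1]; apply Finset.prod_congr rfl; intro p hp; simp [hp]
  · have : ∀ p ∈ Finset.univ.filter (¬ · ∈ K), (if p ∈ K then T p else Finset.univ).card = M := by
      intro p hp
      simp only [Finset.mem_filter] at hp
      simp [hp.2]
    rw [Finset.prod_congr rfl this, Finset.prod_const]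
    congr 1
    have : (Finset.univ.filter (¬ · ∈ K)).card = (Finset.univ : Finset (Fin M × Fin M)).card - K.card := by
      have := Finset.card_filter_add_card_filter_not (s := (Finset.univ : Finset (Fin M × Fin M)))
        (p := (· ∈ K))
      rw [h1] at this; omega
    rw [this]
    simp [Fintype.card_prod]


/-- Count of the event that every vertex of B has fewer than k R-neighbours in W. -/
lemma count_pair (M C k t : ℕ) (hCM : C ≤ M) (B W : Finset (Fin M))
    (hBW : Disjoint B W) (hB : B.card = t) (hW : W.card = t) :
    (Finset.univ.filter (fun ω : Omega M =>
        ∀ v ∈ B, (W.filter (fun u => R M C ω v u)).card < k)).card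
      ≤ (∑ T ∈ W.powerset.filter (fun T => T.card ≤ k), C ^ T.card * (M - C) ^ (t - T.card)) ^ t
          * M ^ (M * M - t * t) := by
  classical
  set s : Fin M → Finset (Finset (Fin M)) :=
    fun v => if v ∈ B then W.powerset.filter (fun T => T.card ≤ k) else {∅} with hs
  set G := Fintype.piFinset s with hG
  -- subset of a big union
  have hsub : (Finset.univ.filter (fun ω : Omega M =>
        ∀ v ∈ B, (W.filter (fun u => R M C ω v u)).card < k))
      ⊆ G.biUnion (fun g => Finset.univ.filter (fun ω : Omega M =>
          ∀ p ∈ B ×ˢ W, ω p ∈ (if p.2 ∈ g p.1 then Finset.univ.filter (fun x : Fin M => x.val < C)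
            else Finset.univ.filter (fun x : Fin M => ¬ x.val < C)))) := by
    intro ω hω
    simp only [Finset.mem_filter, Finset.mem_univ, true_and] at hω
    rw [Finset.mem_biUnion]
    refine ⟨fun v => if v ∈ B then W.filter (fun u => (ω (v,u)).val < C) else ∅, ?_, ?_⟩
    · rw [hG, Fintype.mem_piFinset]
      intro v
      rw [hs]
      by_cases hv : v ∈ B <;> simp only [hv, if_true, if_false]
      · simp only [Finset.mem_filter, Finset.mem_powerset]
        refine ⟨Finset.filter_subset _ _, ?_⟩
        have hsubN : W.filter (fun u => (ω (v,u)).val < C) ⊆ W.filter (fun u => R M C ω v u) := by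
          intro u hu
          simp only [Finset.mem_filter] at hu ⊢
          refine ⟨hu.1, ?_, Or.inl hu.2⟩
          intro h; exact (Finset.disjoint_left.mp hBW hv) (h ▸ hu.1)
        calc (W.filter (fun u => (ω (v,u)).val < C)).card
            ≤ (W.filter (fun u => R M C ω v u)).card := Finset.card_le_card hsubN
          _ ≤ k := le_of_lt (hω v hv)
      · simp
    · simp only [Finset.mem_filter, Finset.mem_univ, true_and]
      rintro ⟨v, u⟩ hp
      rw [Finset.mem_product] at hp
      simp only [hp.1, if_true]
      by_cases hc : (ω (v,u)).val < C
      · have hmem : u ∈ W.filter (fun u => (ω (v,u)).val < C) := by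
          simp only [Finset.mem_filter]; exact ⟨hp.2, hc⟩
        simp only [hmem, if_true, Finset.mem_filter, Finset.mem_univ, true_and]
        exact hc
      · have hnot : u ∉ W.filter (fun u => (ω (v,u)).val < C) := by
          simp only [Finset.mem_filter]; tauto
        simp only [hnot, if_false, Finset.mem_filter, Finset.mem_univ, true_and]
        exact hc
  -- bound the union
  calc (Finset.univ.filter (fun ω : Omega M =>
        ∀ v ∈ B, (W.filter (fun u => R M C ω v u)).card < k)).card
      ≤ ∑ g ∈ G, (Finset.univ.filter (fun ω : Omega M =>
          ∀ p ∈ B ×ˢ W, ω p ∈ (if p.2 ∈ g p.1 then Finset.univ.filter (fun x : Fin M => x.val < C)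
            else Finset.univ.filter (fun x : Fin M => ¬ x.val < C)))).card :=
        le_trans (Finset.card_le_card hsub) (Finset.card_biUnion_le)
    _ ≤ _ := by
        have hcount : ∀ g ∈ G, (Finset.univ.filter (fun ω : Omega M =>
            ∀ p ∈ B ×ˢ W, ω p ∈ (if p.2 ∈ g p.1 then Finset.univ.filter (fun x : Fin M => x.val < C)
              else Finset.univ.filter (fun x : Fin M => ¬ x.val < C)))).card
            = (∏ v ∈ B, C ^ (g v).card * (M - C) ^ (t - (g v).card)) * M ^ (M * M - t * t) := by
          intro g hg
          rw [count_constrained]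
          have hcard : (B ×ˢ W).card = t * t := by rw [Finset.card_product, hB, hW]
          rw [hcard]
          congr 1
          rw [Finset.prod_product]
          apply Finset.prod_congr rfl
          intro v hv
          have hgv : g v ⊆ W ∧ (g v).card ≤ k := by
            rw [hG, Fintype.mem_piFinset] at hg
            have := hg v
            rw [hs] at this
            simp only [hv, if_true, Finset.mem_filter, Finset.mem_powerset] at this
            exact this
          have : ∀ u ∈ W, ((if u ∈ g v then Finset.univ.filter (fun x : Fin M => x.val < C)
              else Finset.univ.filter (fun x : Fin M => ¬ x.val < C))).card
              = (if u ∈ g v then C else M - C) := by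
            intro u hu
            by_cases h : u ∈ g v
            · rw [if_pos h, if_pos h]; exact card_lt_thresh M C hCM
            · rw [if_neg h, if_neg h]; exact card_ge_thresh M C hCM
          rw [Finset.prod_congr rfl this]
          rw [← Finset.prod_filter_mul_prod_filter_not W (· ∈ g v)]
          have h1 : W.filter (· ∈ g v) = g v := by
            ext x
            simp only [Finset.mem_filter]
            exact ⟨fun h => h.2, fun h => ⟨hgv.1 h, h⟩⟩
          have h2 : (W.filter (¬ · ∈ g v)).card = t - (g v).card := by
            have := Finset.card_filter_add_card_filter_not (s := W) (p := (· ∈ g v))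
            rw [h1, hW] at this
            omega
          congr 1
          · rw [h1]
            rw [Finset.prod_congr rfl (fun x hx => if_pos hx), Finset.prod_const]
          · rw [Finset.prod_congr rfl (fun x hx => if_neg (Finset.mem_filter.mp hx).2),
              Finset.prod_const, h2]
        calc ∑ g ∈ G, (Finset.univ.filter (fun ω : Omega M =>
            ∀ p ∈ B ×ˢ W, ω p ∈ (if p.2 ∈ g p.1 then Finset.univ.filter (fun x : Fin M => x.val < C)
              else Finset.univ.filter (fun x : Fin M => ¬ x.val < C)))).card
            = ∑ g ∈ G, (∏ v ∈ B, C ^ (g v).card * (M - C) ^ (t - (g v).card)) * M ^ (M * M - t * t) :=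
              Finset.sum_congr rfl hcount
          _ = (∑ g ∈ G, ∏ v ∈ B, C ^ (g v).card * (M - C) ^ (t - (g v).card)) * M ^ (M * M - t * t) := by
              rw [Finset.sum_mul]
          _ ≤ _ := by
              refine Nat.mul_le_mul_right _ (le_of_eq ?_)
              set f : Fin M → Finset (Fin M) → ℕ :=
                fun v T => if v ∈ B then C ^ T.card * (M - C) ^ (t - T.card) else 1 with hf
              have step1 : ∀ g ∈ G, ∏ v ∈ B, C ^ (g v).card * (M - C) ^ (t - (g v).card)
                  = ∏ v : Fin M, f v (g v) := by
                intro g hg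
                rw [← Finset.prod_filter_mul_prod_filter_not Finset.univ (· ∈ B) (fun v => f v (g v))]
                have hfB : Finset.univ.filter (· ∈ B) = B := by ext p; simp
                rw [hfB]
                have e1 : ∏ v ∈ B, f v (g v) = ∏ v ∈ B, C ^ (g v).card * (M - C) ^ (t - (g v).card) :=
                  Finset.prod_congr rfl (fun v hv => by rw [hf]; simp [hv])
                have e2 : ∏ v ∈ Finset.univ.filter (¬ · ∈ B), f v (g v) = 1 :=
                  Finset.prod_eq_one (fun v hv => by
                    rw [hf]; simp only [(Finset.mem_filter.mp hv).2, if_neg]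
                    simp [(Finset.mem_filter.mp hv).2])
                rw [e1, e2, mul_one]
              rw [Finset.sum_congr rfl step1, hG, ← Finset.prod_univ_sum]
              rw [← Finset.prod_filter_mul_prod_filter_not Finset.univ (· ∈ B)
                (fun v => ∑ T ∈ s v, f v T)]
              have hfB : Finset.univ.filter (· ∈ B) = B := by ext p; simp
              rw [hfB]
              have e1 : ∏ v ∈ B, (∑ T ∈ s v, f v T)
                  = ∏ v ∈ B, (∑ T ∈ W.powerset.filter (fun T => T.card ≤ k),
                      C ^ T.card * (M - C) ^ (t - T.card)) := by
                apply Finset.prod_congr rfl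
                intro v hv
                rw [hs, hf]
                simp only [hv, if_true]
              have e2 : ∏ v ∈ Finset.univ.filter (¬ · ∈ B), (∑ T ∈ s v, f v T) = 1 := by
                apply Finset.prod_eq_one
                intro v hv
                have hnv := (Finset.mem_filter.mp hv).2
                rw [hs, hf]
                simp [hnv]
              rw [e1, e2, mul_one, Finset.prod_const, hB]

lemma sum_powerset_eval (M C k t : ℕ) (W : Finset (Fin M)) (hW : W.card = t) :
    (∑ T ∈ W.powerset.filter (fun T => T.card ≤ k), C ^ T.card * (M - C) ^ (t - T.card))
      = ∑ i ∈ Finset.range (k+1), t.choose i * (C ^ i * (M - C) ^ (t - i)) := by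
  have hsplit : W.powerset.filter (fun T => T.card ≤ k)
      = (Finset.range (k+1)).biUnion (fun i => W.powersetCard i) := by
    ext T
    simp only [Finset.mem_filter, Finset.mem_powerset, Finset.mem_biUnion, Finset.mem_range,
      Finset.mem_powersetCard]
    constructor
    · rintro ⟨h1, h2⟩; exact ⟨T.card, by omega, h1, rfl⟩
    · rintro ⟨i, hi, h1, h2⟩; exact ⟨h1, by omega⟩
  rw [hsplit, Finset.sum_biUnion]
  · apply Finset.sum_congr rfl
    intro i hi
    have : ∀ T ∈ W.powersetCard i, C ^ T.card * (M - C) ^ (t - T.card)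
        = C ^ i * (M - C) ^ (t - i) := by
      intro T hT
      rw [(Finset.mem_powersetCard.mp hT).2]
    rw [Finset.sum_congr rfl this, Finset.sum_const, Finset.card_powersetCard, hW, smul_eq_mul]
  · intro i hi j hj hij
    apply Finset.disjoint_left.mpr
    intro T hTi hTj
    exact hij ((Finset.mem_powersetCard.mp hTi).2.symm.trans (Finset.mem_powersetCard.mp hTj).2)

/-- count of the event that vertex v has R-degree more than 2e+1 -/
lemma count_deg (M C : ℕ) (hCM : C ≤ M) (e : ℕ) (v : Fin M) :
    (Finset.univ.filter (fun ω : Omega M =>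
        2*e+1 < (Finset.univ.filter (fun u => R M C ω v u)).card)).card
      ≤ 2 * (M.choose (e+1)) * (C^(e+1) * M^(M*M - (e+1))) := by
  classical
  set P := (Finset.univ : Finset (Fin M)).powersetCard (e+1) with hP
  have hsub : (Finset.univ.filter (fun ω : Omega M =>
        2*e+1 < (Finset.univ.filter (fun u => R M C ω v u)).card))
      ⊆ (P.biUnion (fun S => Finset.univ.filter (fun ω : Omega M => ∀ u ∈ S, (ω (v,u)).val < C)))
        ∪ (P.biUnion (fun S => Finset.univ.filter (fun ω : Omega M => ∀ u ∈ S, (ω (u,v)).val < C))) := by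
    intro ω hω
    simp only [Finset.mem_filter, Finset.mem_univ, true_and] at hω
    have hsplit : (Finset.univ.filter (fun u => R M C ω v u))
        ⊆ (Finset.univ.filter (fun u : Fin M => (ω (v,u)).val < C))
          ∪ (Finset.univ.filter (fun u : Fin M => (ω (u,v)).val < C)) := by
      intro u hu
      simp only [Finset.mem_filter, Finset.mem_univ, true_and, Finset.mem_union] at hu ⊢
      exact hu.2
    have hcard := le_trans (Finset.card_le_card hsplit) (Finset.card_union_le _ _)
    have : e+1 ≤ (Finset.univ.filter (fun u : Fin M => (ω (v,u)).val < C)).card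
        ∨ e+1 ≤ (Finset.univ.filter (fun u : Fin M => (ω (u,v)).val < C)).card := by omega
    rw [Finset.mem_union]
    rcases this with h | h
    · left
      obtain ⟨S, hS1, hS2⟩ := Finset.exists_subset_card_eq h
      rw [Finset.mem_biUnion]
      refine ⟨S, by rw [hP]; exact Finset.mem_powersetCard.mpr ⟨Finset.subset_univ _, hS2⟩, ?_⟩
      simp only [Finset.mem_filter, Finset.mem_univ, true_and]
      intro u hu
      exact (Finset.mem_filter.mp (hS1 hu)).2
    · right
      obtain ⟨S, hS1, hS2⟩ := Finset.exists_subset_card_eq h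
      rw [Finset.mem_biUnion]
      refine ⟨S, by rw [hP]; exact Finset.mem_powersetCard.mpr ⟨Finset.subset_univ _, hS2⟩, ?_⟩
      simp only [Finset.mem_filter, Finset.mem_univ, true_and]
      intro u hu
      exact (Finset.mem_filter.mp (hS1 hu)).2
  have hPcard : P.card = M.choose (e+1) := by
    rw [hP, Finset.card_powersetCard, Finset.card_univ, Fintype.card_fin]
  calc (Finset.univ.filter (fun ω : Omega M =>
        2*e+1 < (Finset.univ.filter (fun u => R M C ω v u)).card)).card
      ≤ _ := Finset.card_le_card hsub
    _ ≤ _ := Finset.card_union_le _ _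
    _ ≤ 2 * (M.choose (e+1)) * (C^(e+1) * M^(M*M - (e+1))) := by
        have b1 : ∀ S ∈ P, (Finset.univ.filter (fun ω : Omega M =>
            ∀ u ∈ S, (ω (v,u)).val < C)).card ≤ C^(e+1) * M^(M*M - (e+1)) := by
          intro S hS
          have heq : (Finset.univ.filter (fun ω : Omega M => ∀ u ∈ S, (ω (v,u)).val < C))
              = (Finset.univ.filter (fun ω : Omega M => ∀ p ∈ S.image (fun u => (v,u)),
                  ω p ∈ Finset.univ.filter (fun x : Fin M => x.val < C))) := by
            apply Finset.filter_congr
            intro ω _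
            simp only [Finset.mem_image, eq_iff_iff]
            constructor
            · rintro h p ⟨u, hu, rfl⟩
              simp only [Finset.mem_filter, Finset.mem_univ, true_and]
              exact h u hu
            · intro h u hu
              have := h (v,u) ⟨u, hu, rfl⟩
              simpa using this
          rw [heq, count_constrained]
          have hinj : Function.Injective (fun u : Fin M => (v,u)) := by
            intro a b hab; simpa using hab
          have hcardim : (S.image (fun u => (v,u))).card = e+1 := by
            rw [Finset.card_image_of_injective _ hinj, (Finset.mem_powersetCard.mp (by rw [hP] at hS; exact hS)).2]
          rw [hcardim]
          apply Nat.mul_le_mul_right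
          calc ∏ p ∈ S.image (fun u => (v,u)), (Finset.univ.filter (fun x : Fin M => x.val < C)).card
              = C ^ (e+1) := by
                rw [Finset.prod_const, card_lt_thresh M C hCM, hcardim]
            _ ≤ C ^ (e+1) := le_rfl
        have b2 : ∀ S ∈ P, (Finset.univ.filter (fun ω : Omega M =>
            ∀ u ∈ S, (ω (u,v)).val < C)).card ≤ C^(e+1) * M^(M*M - (e+1)) := by
          intro S hS
          have heq : (Finset.univ.filter (fun ω : Omega M => ∀ u ∈ S, (ω (u,v)).val < C))
              = (Finset.univ.filter (fun ω : Omega M => ∀ p ∈ S.image (fun u => (u,v)),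
                  ω p ∈ Finset.univ.filter (fun x : Fin M => x.val < C))) := by
            apply Finset.filter_congr
            intro ω _
            simp only [Finset.mem_image, eq_iff_iff]
            constructor
            · rintro h p ⟨u, hu, rfl⟩
              simp only [Finset.mem_filter, Finset.mem_univ, true_and]
              exact h u hu
            · intro h u hu
              have := h (u,v) ⟨u, hu, rfl⟩
              simpa using this
          rw [heq, count_constrained]
          have hinj : Function.Injective (fun u : Fin M => ((u,v) : Fin M × Fin M)) := by
            intro a b hab; simpa using hab
          have hcardim : (S.image (fun u => (u,v))).card = e+1 := by
            rw [Finset.card_image_of_injective _ hinj, (Finset.mem_powersetCard.mp (by rw [hP] at hS; exact hS)).2]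
          rw [hcardim]
          apply Nat.mul_le_mul_right
          calc ∏ p ∈ S.image (fun u => (u,v)), (Finset.univ.filter (fun x : Fin M => x.val < C)).card
              = C ^ (e+1) := by
                rw [Finset.prod_const, card_lt_thresh M C hCM, hcardim]
            _ ≤ C ^ (e+1) := le_rfl
        have c1 : (P.biUnion (fun S => Finset.univ.filter
            (fun ω : Omega M => ∀ u ∈ S, (ω (v,u)).val < C))).card
            ≤ M.choose (e+1) * (C^(e+1) * M^(M*M - (e+1))) := by
          refine le_trans Finset.card_biUnion_le ?_
          refine le_trans (Finset.sum_le_card_nsmul P _ _ b1) ?_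
          rw [smul_eq_mul, hPcard]
        have c2 : (P.biUnion (fun S => Finset.univ.filter
            (fun ω : Omega M => ∀ u ∈ S, (ω (u,v)).val < C))).card
            ≤ M.choose (e+1) * (C^(e+1) * M^(M*M - (e+1))) := by
          refine le_trans Finset.card_biUnion_le ?_
          refine le_trans (Finset.sum_le_card_nsmul P _ _ b2) ?_
          rw [smul_eq_mul, hPcard]
        linarith


lemma markov (M C e t : ℕ) (hCM : C ≤ M) :
    (Finset.univ.filter (fun ω : Omega M => t < (HDeg M C (2*e+1) ω).card)).card * (t+1)
      ≤ M * (2 * M.choose (e+1) * (C^(e+1) * M^(M*M - (e+1)))) := by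
  classical
  have step1 : (Finset.univ.filter (fun ω : Omega M => t < (HDeg M C (2*e+1) ω).card)).card * (t+1)
      ≤ ∑ ω : Omega M, (HDeg M C (2*e+1) ω).card := by
    calc (Finset.univ.filter (fun ω : Omega M => t < (HDeg M C (2*e+1) ω).card)).card * (t+1)
        = ∑ ω ∈ Finset.univ.filter (fun ω : Omega M => t < (HDeg M C (2*e+1) ω).card), (t+1) := by
          rw [Finset.sum_const, smul_eq_mul]
      _ ≤ ∑ ω ∈ Finset.univ.filter (fun ω : Omega M => t < (HDeg M C (2*e+1) ω).card),
            (HDeg M C (2*e+1) ω).card := by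
          apply Finset.sum_le_sum
          intro ω hω
          exact (Finset.mem_filter.mp hω).2
      _ ≤ ∑ ω : Omega M, (HDeg M C (2*e+1) ω).card :=
          Finset.sum_le_sum_of_subset (Finset.filter_subset _ _)
  have step2 : ∑ ω : Omega M, (HDeg M C (2*e+1) ω).card
      ≤ M * (2 * M.choose (e+1) * (C^(e+1) * M^(M*M - (e+1)))) := by
    have swap : ∑ ω : Omega M, (HDeg M C (2*e+1) ω).card
        = ∑ v : Fin M, (Finset.univ.filter (fun ω : Omega M =>
            2*e+1 < (Finset.univ.filter (fun u => R M C ω v u)).card)).card := by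
      have e1 : ∀ ω : Omega M, (HDeg M C (2*e+1) ω).card
          = ∑ v : Fin M, if 2*e+1 < (Finset.univ.filter (fun u => R M C ω v u)).card then 1 else 0 := by
        intro ω
        rw [HDeg, Finset.card_filter]
      have e2 : ∀ v : Fin M, (Finset.univ.filter (fun ω : Omega M =>
          2*e+1 < (Finset.univ.filter (fun u => R M C ω v u)).card)).card
          = ∑ ω : Omega M, if 2*e+1 < (Finset.univ.filter (fun u => R M C ω v u)).card then 1 else 0 := by
        intro v
        rw [Finset.card_filter]
      rw [Finset.sum_congr rfl (fun ω _ => e1 ω), Finset.sum_congr rfl (fun v _ => e2 v)]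
      exact Finset.sum_comm
    rw [swap]
    calc ∑ v : Fin M, (Finset.univ.filter (fun ω : Omega M =>
            2*e+1 < (Finset.univ.filter (fun u => R M C ω v u)).card)).card
        ≤ ∑ _v : Fin M, 2 * M.choose (e+1) * (C^(e+1) * M^(M*M - (e+1))) :=
          Finset.sum_le_sum (fun v _ => count_deg M C hCM e v)
      _ = M * (2 * M.choose (e+1) * (C^(e+1) * M^(M*M - (e+1)))) := by
          rw [Finset.sum_const, smul_eq_mul, Finset.card_univ, Fintype.card_fin]
  exact le_trans step1 step2

/-- existence of a good sample point, given the two numeric bounds -/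
lemma exists_good (M C k t e : ℕ) (hCM : C ≤ M) (hM : 2 ≤ M)
    (hdeg : 4 * (M * (2 * M.choose (e+1) * (C^(e+1) * M^(M*M - (e+1))))) ≤ (t+1) * M^(M*M))
    (hpair : 4 * (2^M * 2^M *
        ((∑ i ∈ Finset.range (k+1), t.choose i * (C ^ i * (M - C) ^ (t - i))) ^ t
          * M ^ (M * M - t * t))) ≤ M^(M*M)) :
    ∃ ω : Omega M, (HDeg M C (2*e+1) ω).card ≤ t ∧
      ∀ B W : Finset (Fin M), B.card = t → W.card = t → Disjoint B W →
        ∃ v ∈ B, k ≤ (W.filter (fun u => R M C ω v u)).card := by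
  classical
  by_contra hcon
  push_neg at hcon
  -- every ω is in one of the two bad events
  set Bad1 := Finset.univ.filter (fun ω : Omega M => t < (HDeg M C (2*e+1) ω).card) with hB1
  set Bad2 := Finset.univ.filter (fun ω : Omega M => ∃ B W : Finset (Fin M),
      B.card = t ∧ W.card = t ∧ Disjoint B W ∧
      ∀ v ∈ B, (W.filter (fun u => R M C ω v u)).card < k) with hB2
  have hcover : (Finset.univ : Finset (Omega M)) ⊆ Bad1 ∪ Bad2 := by
    intro ω _
    rw [Finset.mem_union, hB1, hB2]
    simp only [Finset.mem_filter, Finset.mem_univ, true_and]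
    rcases le_or_gt (HDeg M C (2*e+1) ω).card t with h | h
    · right
      obtain ⟨B, W, hB, hW, hD, hbad⟩ := hcon ω h
      exact ⟨B, W, hB, hW, hD, hbad⟩
    · left; exact h
  -- counting
  have hcard1 : 4 * Bad1.card * (t+1) ≤ (t+1) * M^(M*M) := by
    calc 4 * Bad1.card * (t+1) = 4 * (Bad1.card * (t+1)) := by ring
      _ ≤ 4 * (M * (2 * M.choose (e+1) * (C^(e+1) * M^(M*M - (e+1))))) :=
          Nat.mul_le_mul_left 4 (markov M C e t hCM)
      _ ≤ (t+1) * M^(M*M) := hdeg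
  have hcard1' : 4 * Bad1.card ≤ M^(M*M) := by
    have := Nat.le_of_mul_le_mul_right (by linarith [hcard1] : 4 * Bad1.card * (t+1) ≤ M^(M*M) * (t+1)) (Nat.succ_pos t)
    exact this
  have hcard2 : 4 * Bad2.card ≤ M^(M*M) := by
    -- Bad2 is contained in union over pairs
    have hsub : Bad2 ⊆ (Finset.univ : Finset (Finset (Fin M) × Finset (Fin M))).biUnion
        (fun BW => if BW.1.card = t ∧ BW.2.card = t ∧ Disjoint BW.1 BW.2 then
          Finset.univ.filter (fun ω : Omega M =>
            ∀ v ∈ BW.1, (BW.2.filter (fun u => R M C ω v u)).card < k) else ∅) := by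
      intro ω hω
      rw [hB2, Finset.mem_filter] at hω
      obtain ⟨_, B, W, hB, hW, hD, hbad⟩ := hω
      rw [Finset.mem_biUnion]
      refine ⟨(B, W), Finset.mem_univ _, ?_⟩
      rw [if_pos ⟨hB, hW, hD⟩]
      simp only [Finset.mem_filter, Finset.mem_univ, true_and]
      exact hbad
    have hbound : ∀ BW : Finset (Fin M) × Finset (Fin M),
        (if BW.1.card = t ∧ BW.2.card = t ∧ Disjoint BW.1 BW.2 then
          Finset.univ.filter (fun ω : Omega M =>
            ∀ v ∈ BW.1, (BW.2.filter (fun u => R M C ω v u)).card < k) else ∅).card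
        ≤ (∑ i ∈ Finset.range (k+1), t.choose i * (C ^ i * (M - C) ^ (t - i))) ^ t
            * M ^ (M * M - t * t) := by
      intro BW
      by_cases h : BW.1.card = t ∧ BW.2.card = t ∧ Disjoint BW.1 BW.2
      · rw [if_pos h]
        have := count_pair M C k t hCM BW.1 BW.2 h.2.2 h.1 h.2.1
        rwa [sum_powerset_eval M C k t BW.2 h.2.1] at this
      · rw [if_neg h]; simp
    calc 4 * Bad2.card
        ≤ 4 * ∑ BW ∈ (Finset.univ : Finset (Finset (Fin M) × Finset (Fin M))),
            (if BW.1.card = t ∧ BW.2.card = t ∧ Disjoint BW.1 BW.2 then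
              Finset.univ.filter (fun ω : Omega M =>
                ∀ v ∈ BW.1, (BW.2.filter (fun u => R M C ω v u)).card < k) else ∅).card := by
          apply Nat.mul_le_mul_left
          exact le_trans (Finset.card_le_card hsub) Finset.card_biUnion_le
      _ ≤ 4 * (2^M * 2^M *
            ((∑ i ∈ Finset.range (k+1), t.choose i * (C ^ i * (M - C) ^ (t - i))) ^ t
              * M ^ (M * M - t * t))) := by
          apply Nat.mul_le_mul_left
          calc ∑ BW ∈ (Finset.univ : Finset (Finset (Fin M) × Finset (Fin M))), _
              ≤ (Finset.univ : Finset (Finset (Fin M) × Finset (Fin M))).card *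
                ((∑ i ∈ Finset.range (k+1), t.choose i * (C ^ i * (M - C) ^ (t - i))) ^ t
                  * M ^ (M * M - t * t)) := by
                refine le_trans (Finset.sum_le_card_nsmul _ _ _ (fun BW _ => hbound BW)) ?_
                rw [smul_eq_mul]
            _ = 2^M * 2^M * ((∑ i ∈ Finset.range (k+1), t.choose i * (C ^ i * (M - C) ^ (t - i))) ^ t
                  * M ^ (M * M - t * t)) := by
                congr 2
                rw [Finset.card_univ, Fintype.card_prod, Fintype.card_finset, Fintype.card_fin]
      _ ≤ M^(M*M) := hpair
  have htotal : (Finset.univ : Finset (Omega M)).card = M^(M*M) := by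
    simp [Finset.card_univ, Fintype.card_fun]
  have hpos : 0 < M^(M*M) := Nat.pow_pos (by omega)
  have : M^(M*M) ≤ Bad1.card + Bad2.card := by
    rw [← htotal]
    exact le_trans (Finset.card_le_card hcover) (Finset.card_union_le _ _)
  omega


lemma hdeg_bound (M C e t : ℕ) (he1 : e+1 ≤ M*M)
    (hr : 8 * (M:ℝ) * (C:ℝ)^(e+1) / (Nat.factorial (e+1)) ≤ (t:ℝ)) :
    4 * (M * (2 * M.choose (e+1) * (C^(e+1) * M^(M*M - (e+1))))) ≤ (t+1) * M^(M*M) := by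
  have hsplit : M^(M*M) = M^(e+1) * M^(M*M - (e+1)) := by
    rw [← pow_add]
    congr 1
    omega
  rw [hsplit]
  have key : 8 * M * M.choose (e+1) * C^(e+1) ≤ (t+1) * M^(e+1) := by
    have hcast : (8 * M * M.choose (e+1) * C^(e+1) : ℝ) ≤ ((t+1) * M^(e+1) : ℝ) := by
      have hch : (M.choose (e+1) : ℝ) ≤ (M:ℝ)^(e+1) / (Nat.factorial (e+1)) :=
        Nat.choose_le_pow_div (e+1) M
      have hfac : (0:ℝ) < (Nat.factorial (e+1)) := by positivity
      have hCpos : (0:ℝ) ≤ (C:ℝ)^(e+1) := by positivity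
      have hMpos : (0:ℝ) ≤ (M:ℝ) := by positivity
      calc (8 * M * M.choose (e+1) * C^(e+1) : ℝ)
          ≤ 8 * M * ((M:ℝ)^(e+1) / (Nat.factorial (e+1))) * C^(e+1) := by
            apply mul_le_mul_of_nonneg_right _ hCpos
            apply mul_le_mul_of_nonneg_left hch (by positivity)
        _ = (8 * (M:ℝ) * (C:ℝ)^(e+1) / (Nat.factorial (e+1))) * (M:ℝ)^(e+1) := by ring
        _ ≤ (t:ℝ) * (M:ℝ)^(e+1) := by
            apply mul_le_mul_of_nonneg_right hr (by positivity)
        _ ≤ ((t+1) * M^(e+1) : ℝ) := by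
            push_cast
            nlinarith [pow_nonneg hMpos (e+1)]
    exact_mod_cast hcast
  calc 4 * (M * (2 * M.choose (e+1) * (C^(e+1) * M^(M*M - (e+1)))))
      = (8 * M * M.choose (e+1) * C^(e+1)) * M^(M*M - (e+1)) := by ring
    _ ≤ ((t+1) * M^(e+1)) * M^(M*M - (e+1)) := Nat.mul_le_mul_right _ key
    _ = (t+1) * (M^(e+1) * M^(M*M - (e+1))) := by ring

/-- the A-sum bound, purely in ℕ -/
lemma A_bound (M C k t : ℕ) (hkt : k ≤ t) (hMtC : M ≤ t * C) :
    (∑ i ∈ Finset.range (k+1), t.choose i * (C ^ i * (M - C) ^ (t - i)))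
      ≤ (k+1) * ((t*C)^k * (M - C)^(t-k)) := by
  calc (∑ i ∈ Finset.range (k+1), t.choose i * (C ^ i * (M - C) ^ (t - i)))
      ≤ ∑ _i ∈ Finset.range (k+1), (t*C)^k * (M - C)^(t-k) := by
        apply Finset.sum_le_sum
        intro i hi
        rw [Finset.mem_range] at hi
        have hik : i ≤ k := by omega
        have h1 : t.choose i * (C ^ i * (M - C) ^ (t - i)) ≤ (t*C)^i * (M-C)^(t-i) := by
          rw [mul_pow, ← mul_assoc]
          apply Nat.mul_le_mul_right
          exact Nat.mul_le_mul_right _ (Nat.choose_le_pow t i)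
        have h2 : (t*C)^i * (M-C)^(t-i) ≤ (t*C)^k * (M-C)^(t-k) := by
          have hexp : t - i = (k - i) + (t - k) := by omega
          rw [hexp, pow_add]
          have h3 : (M-C)^(k-i) ≤ (t*C)^(k-i) :=
            Nat.pow_le_pow_left (le_trans (Nat.sub_le M C) hMtC) _
          calc (t*C)^i * ((M-C)^(k-i) * (M-C)^(t-k))
              ≤ (t*C)^i * ((t*C)^(k-i) * (M-C)^(t-k)) := by
                apply Nat.mul_le_mul_left
                exact Nat.mul_le_mul_right _ h3
            _ = (t*C)^k * (M-C)^(t-k) := by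
                rw [← mul_assoc, ← pow_add]
                congr 2
                omega
        exact le_trans h1 h2
    _ = (k+1) * ((t*C)^k * (M - C)^(t-k)) := by
        rw [Finset.sum_const, Finset.card_range, smul_eq_mul]


lemma key_const (k : ℕ) (ε y : ℝ) (hε : 0 < ε) (hy : 0 ≤ y)
    (hy0 : 2 * Real.log ((k+1) * 8^k * (Nat.factorial k) * (4:ℝ)^((8:ℝ)/ε)) ≤ y) :
    (k+1:ℝ) * (4*y)^k * Real.exp (-y) ≤ (4:ℝ)^(-(8:ℝ)/ε) := by
  set P : ℝ := (k+1) * 8^k * (Nat.factorial k) * (4:ℝ)^((8:ℝ)/ε) with hP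
  have hPpos : 0 < P := by
    rw [hP]
    have : (0:ℝ) < (4:ℝ)^((8:ℝ)/ε) := Real.rpow_pos_of_pos (by norm_num) _
    positivity
  have h1 : P ≤ Real.exp (y/2) := by
    calc P = Real.exp (Real.log P) := (Real.exp_log hPpos).symm
      _ ≤ Real.exp (y/2) := by
        apply Real.exp_le_exp.mpr
        linarith
  have h2 : (4*y)^k ≤ 8^k * ((Nat.factorial k) * Real.exp (y/2)) := by
    have : (4*y)^k = 8^k * (y/2)^k := by
      rw [← mul_pow]
      congr 1
      ring
    rw [this]
    apply mul_le_mul_of_nonneg_left _ (by positivity)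
    have hh := Real.pow_div_factorial_le_exp (x := y/2) (by linarith) k
    have hfac : (0:ℝ) < (Nat.factorial k) := by positivity
    calc (y/2)^k = ((y/2)^k / (Nat.factorial k)) * (Nat.factorial k) :=
          (div_mul_cancel₀ _ (ne_of_gt hfac)).symm
      _ ≤ Real.exp (y/2) * (Nat.factorial k) := by
          apply mul_le_mul_of_nonneg_right hh (le_of_lt hfac)
      _ = (Nat.factorial k) * Real.exp (y/2) := by ring
  have hinv : (4:ℝ)^(-(8:ℝ)/ε) = ((4:ℝ)^((8:ℝ)/ε))⁻¹ := by
    rw [← Real.rpow_neg (by norm_num)]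
    congr 1
    ring
  have hexpy : Real.exp (-y) = (Real.exp (y/2))⁻¹ * (Real.exp (y/2))⁻¹ := by
    rw [← mul_inv, ← Real.exp_add]
    rw [← Real.exp_neg]
    congr 1
    ring
  have hQpos : (0:ℝ) < (4:ℝ)^((8:ℝ)/ε) := Real.rpow_pos_of_pos (by norm_num) _
  have hexppos : (0:ℝ) < Real.exp (y/2) := Real.exp_pos _
  calc (k+1:ℝ) * (4*y)^k * Real.exp (-y)
      ≤ (k+1:ℝ) * (8^k * ((Nat.factorial k) * Real.exp (y/2))) * Real.exp (-y) := by
        apply mul_le_mul_of_nonneg_right _ (le_of_lt (Real.exp_pos _))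
        apply mul_le_mul_of_nonneg_left h2 (by positivity)
    _ = P * ((4:ℝ)^((8:ℝ)/ε))⁻¹ * (Real.exp (y/2) * Real.exp (-y)) := by
        rw [hP]
        field_simp
    _ ≤ Real.exp (y/2) * ((4:ℝ)^((8:ℝ)/ε))⁻¹ * (Real.exp (y/2) * Real.exp (-y)) := by
        apply mul_le_mul_of_nonneg_right _ (by positivity)
        apply mul_le_mul_of_nonneg_right h1 (by positivity)
    _ = ((4:ℝ)^((8:ℝ)/ε))⁻¹ * (Real.exp (y/2) * Real.exp (y/2) * Real.exp (-y)) := by ring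
    _ = ((4:ℝ)^((8:ℝ)/ε))⁻¹ := by
        rw [← Real.exp_add, ← Real.exp_add]
        norm_num
    _ = (4:ℝ)^(-(8:ℝ)/ε) := hinv.symm

lemma hpair_bound (M C k t : ℕ) (ε : ℝ) (hε : 0 < ε)
    (hCM : C ≤ M) (hkt : k ≤ t) (htM : t ≤ M) (hMtC : M ≤ t * C) (hM1 : 1 ≤ M)
    (ht1 : ε * M / 4 ≤ (t:ℝ)) (ht2 : (t:ℝ) ≤ ε * M / 2)
    (htk : ε * M / 8 ≤ (t:ℝ) - k)
    (hkey : (k+1:ℝ) * ((C:ℝ)*ε/2)^k * Real.exp (-((C:ℝ)*ε/8)) ≤ (4:ℝ)^(-(8:ℝ)/ε)) :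
    4 * (2^M * 2^M *
      ((∑ i ∈ Finset.range (k+1), t.choose i * (C ^ i * (M - C) ^ (t - i))) ^ t
        * M ^ (M*M - t*t))) ≤ M^(M*M) := by
  have htt : t*t ≤ M*M := Nat.mul_le_mul htM htM
  have hsplit : M^(M*M) = M^(t*t) * M^(M*M - t*t) := by
    rw [← pow_add]; congr 1; omega
  rw [hsplit]
  set A := ∑ i ∈ Finset.range (k+1), t.choose i * (C ^ i * (M - C) ^ (t - i)) with hA
  have key : 4 * (2^M * 2^M * A^t) ≤ M^(t*t) := by
    -- prove in ℝ
    have hcast : (4 * (2^M * 2^M * A^t) : ℝ) ≤ ((M:ℝ)^(t*t)) := by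
      set q : ℝ := (4:ℝ)^(-(8:ℝ)/ε) with hq
      have hqpos : 0 < q := Real.rpow_pos_of_pos (by norm_num) _
      have hMR : (0:ℝ) < M := by exact_mod_cast hM1
      have hCR : (0:ℝ) ≤ C := by positivity
      -- step 1 : A ≤ q * M^t
      have hAq : (A:ℝ) ≤ q * (M:ℝ)^t := by
        have h1 : (A:ℝ) ≤ (k+1:ℝ) * (((t:ℝ)*C)^k * ((M:ℝ) - C)^(t-k)) := by
          have := A_bound M C k t hkt hMtC
          have hcast2 : ((M - C : ℕ) : ℝ) = (M:ℝ) - C := by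
            rw [Nat.cast_sub hCM]
          calc (A:ℝ) ≤ ((k+1) * ((t*C)^k * (M - C)^(t-k)) : ℕ) := by exact_mod_cast this
            _ = (k+1:ℝ) * (((t:ℝ)*C)^k * ((M:ℝ) - C)^(t-k)) := by
                push_cast [hcast2]
                ring
        have h2 : ((t:ℝ)*C)^k ≤ ((C:ℝ)*ε/2)^k * (M:ℝ)^k := by
          rw [← mul_pow]
          have hbase : (t:ℝ)*C ≤ (C:ℝ)*ε/2 * M := by nlinarith [hCR]
          exact pow_le_pow_left₀ (by positivity) hbase k
        have hMC0 : (0:ℝ) ≤ (M:ℝ) - C := by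
          have : (C:ℝ) ≤ M := by exact_mod_cast hCM
          linarith
        have h3 : ((M:ℝ) - C)^(t-k) ≤ (M:ℝ)^(t-k) * Real.exp (-((C:ℝ)*ε/8)) := by
          have hstep : (M:ℝ) - C ≤ (M:ℝ) * Real.exp (-(C/M)) := by
            have := Real.add_one_le_exp (-((C:ℝ)/M))
            have h := mul_le_mul_of_nonneg_left this (le_of_lt hMR)
            have heq : (M:ℝ) * (-((C:ℝ)/M) + 1) = (M:ℝ) - C := by
              field_simp
              ring
            linarith
          calc ((M:ℝ) - C)^(t-k) ≤ ((M:ℝ) * Real.exp (-(C/M)))^(t-k) :=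
              pow_le_pow_left₀ hMC0 hstep _
            _ = (M:ℝ)^(t-k) * Real.exp (-(C/M))^(t-k) := mul_pow _ _ _
            _ = (M:ℝ)^(t-k) * Real.exp (-((C:ℝ)*(t-k:ℕ)/M)) := by
                rw [← Real.exp_nat_mul]
                congr 2
                ring
            _ ≤ (M:ℝ)^(t-k) * Real.exp (-((C:ℝ)*ε/8)) := by
                apply mul_le_mul_of_nonneg_left _ (by positivity)
                apply Real.exp_le_exp.mpr
                have hcast3 : ((t - k : ℕ) : ℝ) = (t:ℝ) - k := by
                  rw [Nat.cast_sub hkt]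
                rw [hcast3]
                have hfrac : (C:ℝ)*ε/8 ≤ (C:ℝ)*((t:ℝ)-(k:ℝ))/M := by
                  rw [div_le_div_iff₀ (by norm_num : (0:ℝ) < 8) hMR]
                  nlinarith [hCR, htk]
                linarith
        calc (A:ℝ) ≤ (k+1:ℝ) * (((t:ℝ)*C)^k * ((M:ℝ) - C)^(t-k)) := h1
          _ ≤ (k+1:ℝ) * ((((C:ℝ)*ε/2)^k * (M:ℝ)^k) * ((M:ℝ)^(t-k) * Real.exp (-((C:ℝ)*ε/8)))) := by
              apply mul_le_mul_of_nonneg_left _ (by positivity)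
              exact mul_le_mul h2 h3 (pow_nonneg hMC0 _) (by positivity)
          _ = ((k+1:ℝ) * ((C:ℝ)*ε/2)^k * Real.exp (-((C:ℝ)*ε/8))) * ((M:ℝ)^k * (M:ℝ)^(t-k)) := by
              ring
          _ ≤ q * ((M:ℝ)^k * (M:ℝ)^(t-k)) := by
              apply mul_le_mul_of_nonneg_right hkey (by positivity)
          _ = q * (M:ℝ)^t := by
              rw [← pow_add]
              congr 2
              omega
      -- step 2 : global
      have hApos : (0:ℝ) ≤ (A:ℝ) := by positivity
      have h4M : (2:ℝ)^M * 2^M = 4^M := by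
        rw [← mul_pow]; norm_num
      calc (4 * (2^M * 2^M * A^t) : ℝ)
          = 4 * 4^M * (A:ℝ)^t := by rw [← h4M]; push_cast; ring
        _ ≤ 4 * 4^M * (q * (M:ℝ)^t)^t := by
            apply mul_le_mul_of_nonneg_left _ (by positivity)
            exact pow_le_pow_left₀ hApos hAq t
        _ = (4 * 4^M * q^t) * ((M:ℝ)^t)^t := by ring
        _ ≤ 1 * ((M:ℝ)^t)^t := by
            apply mul_le_mul_of_nonneg_right _ (by positivity)
            -- 4^(M+1) * q^t ≤ 1
            have hqt : q^t = (4:ℝ)^((-(8:ℝ)/ε) * t) := by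
              rw [hq, ← Real.rpow_natCast ((4:ℝ)^(-(8:ℝ)/ε)) t, ← Real.rpow_mul (by norm_num)]
            have h41 : (4:ℝ) * 4^M = (4:ℝ)^((M:ℝ)+1) := by
              rw [Real.rpow_add (by norm_num), Real.rpow_one, Real.rpow_natCast]
              ring
            rw [hqt, h41, ← Real.rpow_add (by norm_num)]
            have hexp : (M:ℝ) + 1 + (-(8:ℝ)/ε) * t ≤ 0 := by
              have h8t : 2 * (M:ℝ) ≤ (8:ℝ)/ε * t := by
                rw [div_mul_eq_mul_div, le_div_iff₀ hε]
                nlinarith [ht1]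
              have : (-(8:ℝ)/ε) * t = -((8:ℝ)/ε * t) := by ring
              rw [this]
              have hM1R : (1:ℝ) ≤ M := by exact_mod_cast hM1
              linarith
            have hfin := Real.rpow_le_rpow_of_exponent_le (x := (4:ℝ)) (by norm_num) hexp
            rw [Real.rpow_zero] at hfin
            exact hfin
        _ = (M:ℝ)^(t*t) := by
            rw [one_mul, ← pow_mul]
    exact_mod_cast hcast
  calc 4 * (2^M * 2^M * (A^t * M^(M*M - t*t)))
      = (4 * (2^M * 2^M * A^t)) * M^(M*M - t*t) := by ring
    _ ≤ M^(t*t) * M^(M*M - t*t) := Nat.mul_le_mul_right _ key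


end Stmt11

open Stmt11 in
/-- For any integer `k ≥ 1` and real `ε > 0`, there are constants `d` and `M₀` such that
for all `M ≥ M₀` there is a graph `F` on `M` vertices with maximum degree at most `d` such
that for every `U ⊆ V(F)` with `|U| ≥ ε·M`, at most `ε·M` vertices of `F` have fewer than
`k` neighbors in `U`. -/
theorem stmt_11 (k : ℕ) (hk : 1 ≤ k) (ε : ℝ) (hε : 0 < ε) :
    ∃ d M₀ : ℕ, ∀ M : ℕ, M₀ ≤ M →
      ∃ F : SimpleGraph (Fin M),
        (∀ v : Fin M, (Finset.univ.filter fun u => F.Adj v u).card ≤ d) ∧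
        ∀ U : Finset (Fin M), ε * (M : ℝ) ≤ (U.card : ℝ) →
          (((Finset.univ.filter fun v : Fin M =>
              (U.filter fun u => F.Adj v u).card < k).card : ℝ)) ≤ ε * (M : ℝ) := by
  classical
  -- trivial case ε ≥ 1
  by_cases hε1 : 1 ≤ ε
  · refine ⟨0, 0, fun M _ => ⟨⊥, ?_, ?_⟩⟩
    · intro v
      simp
    · intro U hU
      refine le_trans (Nat.cast_le.mpr (le_trans (Finset.card_filter_le _ _)
        (le_of_eq (Finset.card_univ.trans (Fintype.card_fin M))))) ?_
      have h0 : (0:ℝ) ≤ (M:ℝ) := Nat.cast_nonneg M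
      have h1 := mul_le_mul_of_nonneg_right hε1 h0
      linarith
  push_neg at hε1
  -- constants
  set y₀ : ℝ := 2 * Real.log ((k+1) * 8^k * (Nat.factorial k) * (4:ℝ)^((8:ℝ)/ε)) with hy₀
  set C : ℕ := ⌈4/ε + (8/ε) * max y₀ 0⌉₊ + 1 with hC
  have hCr : 4/ε + (8/ε) * max y₀ 0 ≤ (C:ℝ) := by
    rw [hC]
    push_cast
    have := Nat.le_ceil (4/ε + (8/ε) * max y₀ 0)
    linarith
  have hC4 : 4/ε ≤ (C:ℝ) := by
    have h0 : 0 ≤ (8/ε) * max y₀ 0 := by positivity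
    linarith
  have hC0 : (0:ℝ) < C := by
    have : (0:ℝ) < 4/ε := by positivity
    linarith
  have hCy : y₀ ≤ (C:ℝ) * ε / 8 := by
    have h1 : (8/ε) * max y₀ 0 ≤ (C:ℝ) := by
      have : 0 ≤ 4/ε := by positivity
      linarith
    have h2 : max y₀ 0 ≤ (C:ℝ) * ε / 8 := by
      rw [div_le_iff₀ hε] at *
      · calc max y₀ 0 = (8/ε) * max y₀ 0 * ε / 8 := by field_simp
          _ ≤ (C:ℝ) * ε / 8 := by
            apply div_le_div_of_nonneg_right _ (by norm_num)
            exact mul_le_mul_of_nonneg_right h1 (le_of_lt hε)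
    exact le_trans (le_max_left _ _) h2
  have hkey : (k+1:ℝ) * ((C:ℝ)*ε/2)^k * Real.exp (-((C:ℝ)*ε/8)) ≤ (4:ℝ)^(-(8:ℝ)/ε) := by
    have h4y : (C:ℝ)*ε/2 = 4*((C:ℝ)*ε/8) := by ring
    rw [h4y]
    apply key_const k ε ((C:ℝ)*ε/8) hε (by positivity) (by rw [← hy₀]; exact hCy)
  -- choose e
  obtain ⟨e, he⟩ : ∃ e : ℕ, (C:ℝ)^(e+1) / (Nat.factorial (e+1)) ≤ ε/32 := by
    have htend := FloorSemiring.tendsto_pow_div_factorial_atTop (K := ℝ) (C:ℝ)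
    have hev := htend.eventually_lt_const (by positivity : (0:ℝ) < ε/32)
    obtain ⟨N, hN⟩ := Filter.eventually_atTop.mp hev
    exact ⟨N, le_of_lt (hN (N+1) (by omega))⟩
  -- M₀
  set M₀ : ℕ := C + e + 4 + ⌈(16 + 8*(k:ℝ))/ε⌉₊ with hM₀
  refine ⟨2*e+1, M₀, fun M hM => ?_⟩
  -- basic facts about M
  have hCM : C ≤ M := by omega
  have hM2 : 2 ≤ M := by omega
  have he1 : e + 1 ≤ M * M := by
    have h1 : e + 1 ≤ M := by omega
    calc e + 1 ≤ M := h1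
      _ ≤ M * M := Nat.le_mul_of_pos_left M (by omega)
  have hMbig : (16 + 8*(k:ℝ))/ε ≤ (M:ℝ) := by
    have h1 : (⌈(16 + 8*(k:ℝ))/ε⌉₊ : ℝ) ≤ M := by
      exact_mod_cast Nat.cast_le.mpr (by omega : ⌈(16 + 8*(k:ℝ))/ε⌉₊ ≤ M)
    exact le_trans (Nat.le_ceil _) h1
  have hεM : 16 + 8*(k:ℝ) ≤ ε * M := by
    rw [div_le_iff₀ hε] at hMbig
    linarith [mul_comm ε (M:ℝ)]
  have hMR : (0:ℝ) < M := by
    have : (0:ℝ) < 16 + 8*k := by positivity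
    nlinarith
  -- t
  set t : ℕ := ⌈ε * M / 4⌉₊ with ht
  have ht_low : ε * M / 4 ≤ (t:ℝ) := Nat.le_ceil _
  have ht_up : (t:ℝ) ≤ ε * M / 4 + 1 := le_of_lt (Nat.ceil_lt_add_one (by positivity))
  have hkR : (1:ℝ) ≤ k := by exact_mod_cast hk
  have hk0 : (0:ℝ) ≤ k := by linarith
  have ht2 : (t:ℝ) ≤ ε * M / 2 := by linarith
  have htM : t ≤ M := by
    have hεMM : ε * M ≤ M := by
      have := mul_le_mul_of_nonneg_right (le_of_lt hε1) (le_of_lt hMR)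
      linarith
    have hM2R : (2:ℝ) ≤ M := by exact_mod_cast hM2
    have : (t:ℝ) ≤ (M:ℝ) := by linarith
    exact_mod_cast this
  have hkt : k ≤ t := by
    have : (k:ℝ) ≤ (t:ℝ) := by linarith
    exact_mod_cast this
  have ht4 : 4 ≤ t := by
    have : (4:ℝ) ≤ (t:ℝ) := by linarith
    exact_mod_cast this
  have hMtC : M ≤ t * C := by
    have : (M:ℝ) ≤ (t:ℝ) * C := by
      have h1 : ε * M / 4 * (4/ε) = M := by field_simp
      calc (M:ℝ) = ε * M / 4 * (4/ε) := h1.symm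
        _ ≤ (t:ℝ) * C := by
          apply mul_le_mul ht_low hC4 (by positivity) (by positivity)
    exact_mod_cast this
  have htk : ε * M / 8 ≤ (t:ℝ) - k := by linarith
  -- the two numeric bounds
  have hdeg : 4 * (M * (2 * M.choose (e+1) * (C^(e+1) * M^(M*M - (e+1))))) ≤ (t+1) * M^(M*M) := by
    apply hdeg_bound M C e t he1
    calc 8 * (M:ℝ) * (C:ℝ)^(e+1) / (Nat.factorial (e+1))
        = 8 * (M:ℝ) * ((C:ℝ)^(e+1) / (Nat.factorial (e+1))) := by ring
      _ ≤ 8 * (M:ℝ) * (ε/32) := by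
          apply mul_le_mul_of_nonneg_left he (by positivity)
      _ = ε * M / 4 := by ring
      _ ≤ (t:ℝ) := ht_low
  have hpair := hpair_bound M C k t ε hε hCM hkt htM hMtC (by omega) ht_low ht2 htk hkey
  -- get the good sample point
  obtain ⟨ω, hgood1, hgood2⟩ := exists_good M C k t e hCM hM2 hdeg hpair
  set H := HDeg M C (2*e+1) ω with hH
  -- the graph
  refine ⟨Graph M C (2*e+1) ω H, ?_, ?_⟩
  · -- degree bound
    intro v
    have hfe : (Finset.univ.filter fun u => (Graph M C (2*e+1) ω H).Adj v u)
        = Finset.univ.filter (fun u => R M C ω v u ∧ v ∉ H ∧ u ∉ H) :=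
      Finset.filter_congr (fun u _ => Iff.rfl)
    rw [hfe]
    by_cases hv : v ∈ H
    · have hempty : (Finset.univ.filter fun u =>
          (R M C ω v u ∧ v ∉ H ∧ u ∉ H)) = ∅ := by
        apply Finset.filter_false_of_mem
        intro u _
        rintro ⟨_, hvH, _⟩
        exact hvH hv
      rw [hempty]
      simp
    · have hsub : (Finset.univ.filter fun u => (R M C ω v u ∧ v ∉ H ∧ u ∉ H))
          ⊆ Finset.univ.filter (fun u => R M C ω v u) := by
        intro u hu
        rw [Finset.mem_filter] at hu ⊢
        exact ⟨hu.1, hu.2.1⟩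
      have hdv : ¬ (2*e+1 < (Finset.univ.filter (fun u => R M C ω v u)).card) := by
        intro hcon
        apply hv
        rw [hH, HDeg, Finset.mem_filter]
        exact ⟨Finset.mem_univ _, hcon⟩
      calc (Finset.univ.filter fun u => (R M C ω v u ∧ v ∉ H ∧ u ∉ H)).card
          ≤ (Finset.univ.filter (fun u => R M C ω v u)).card := Finset.card_le_card hsub
        _ ≤ 2*e+1 := by omega
  · -- the U property
    intro U hU
    have hfe : (Finset.univ.filter fun v : Fin M =>
          (U.filter fun u => (Graph M C (2*e+1) ω H).Adj v u).card < k)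
        = (Finset.univ.filter fun v : Fin M =>
          (U.filter fun u => R M C ω v u ∧ v ∉ H ∧ u ∉ H).card < k) := by
      apply Finset.filter_congr
      intro v _
      have : (U.filter fun u => (Graph M C (2*e+1) ω H).Adj v u)
          = (U.filter fun u => R M C ω v u ∧ v ∉ H ∧ u ∉ H) :=
        Finset.filter_congr (fun u _ => Iff.rfl)
      rw [this]
    rw [hfe]
    set Bad := Finset.univ.filter (fun v : Fin M =>
      (U.filter fun u => (R M C ω v u ∧ v ∉ H ∧ u ∉ H)).card < k) with hBad
    set Bad' := Finset.univ.filter (fun v : Fin M =>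
      (((U \ H)).filter (fun u => R M C ω v u)).card < k) with hBad'
    have hsubBad : Bad ⊆ H ∪ Bad' := by
      intro v hv
      rw [Finset.mem_union]
      by_cases hvH : v ∈ H
      · left; exact hvH
      · right
        rw [hBad, Finset.mem_filter] at hv
        rw [hBad', Finset.mem_filter]
        refine ⟨Finset.mem_univ _, ?_⟩
        have hsub2 : (U \ H).filter (fun u => R M C ω v u)
            ⊆ U.filter (fun u => (R M C ω v u ∧ v ∉ H ∧ u ∉ H)) := by
          intro u hu
          rw [Finset.mem_filter, Finset.mem_sdiff] at hu
          rw [Finset.mem_filter]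
          exact ⟨hu.1.1, hu.2, hvH, hu.1.2⟩
        exact lt_of_le_of_lt (Finset.card_le_card hsub2) hv.2
    -- |U| is large
    have hU4t : 4*t ≤ U.card + 4 := by
      have h1 : (4*(t:ℝ)) ≤ (U.card:ℝ) + 4 := by linarith
      exact_mod_cast h1
    have hBad'small : Bad'.card ≤ 2*t := by
      by_contra hcon
      push_neg at hcon
      obtain ⟨B, hBsub, hBcard⟩ := Finset.exists_subset_card_eq (by omega : t ≤ Bad'.card)
      have hWUcard : t ≤ ((U \ H) \ B).card := by
        have ha := Finset.le_card_sdiff H U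
        have hb := Finset.le_card_sdiff B (U \ H)
        have h3 : H.card ≤ t := hgood1
        omega
      obtain ⟨W, hWsub, hWcard⟩ := Finset.exists_subset_card_eq hWUcard
      have hdisj : Disjoint B W := by
        apply Finset.disjoint_left.mpr
        intro x hxB hxW
        exact (Finset.mem_sdiff.mp (hWsub hxW)).2 hxB
      obtain ⟨v, hvB, hvk⟩ := hgood2 B W hBcard hWcard hdisj
      have hvBad' : v ∈ Bad' := hBsub hvB
      rw [hBad', Finset.mem_filter] at hvBad'
      have hsub3 : W.filter (fun u => R M C ω v u) ⊆ (U \ H).filter (fun u => R M C ω v u) := by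
        apply Finset.filter_subset_filter
        intro x hx
        exact (Finset.mem_sdiff.mp (hWsub hx)).1
      have := Finset.card_le_card hsub3
      omega
    -- conclude
    have hBadcard : Bad.card ≤ 3*t := by
      calc Bad.card ≤ (H ∪ Bad').card := Finset.card_le_card hsubBad
        _ ≤ H.card + Bad'.card := Finset.card_union_le _ _
        _ ≤ t + 2*t := by
            have := hgood1
            omega
        _ = 3*t := by ring
    calc ((Finset.univ.filter fun v : Fin M =>
            (U.filter fun u => (R M C ω v u ∧ v ∉ H ∧ u ∉ H)).card < k).card : ℝ)
        ≤ (3*(t:ℝ)) := by exact_mod_cast hBadcard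
      _ ≤ 3*(ε * M / 4 + 1) := by linarith
      _ ≤ ε * M := by linarith
end
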